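/- arXiv:math/0312297 — 7 statements merged into one kernel-verified Lean document; each statement's English description precedes it below -/
import Mathlib

section
/- A square matrix M with entries in a field is uniquely determined by its initial minors, provided all initial minors are nonzero. That is, if two n × n matrices have all initial minors nonzero and equal, then the matrices are equal. -/
/-- The solid minor of an `n × n` matrix of size `s` whose rows are
`a, a+1, …, a+s-1` and whose columns are `b, b+1, …, b+s-1`. -/
def solidMinor {F : Type*} [Field F] {n : ℕ} (M : Matrix (Fin n) (Fin n) F)
    (s a b : ℕ) (ha : a + s ≤ n) (hb : b + s ≤ n) : F :=
  (M.submatrix (fun t : Fin s => (⟨a + t.val, by omega⟩ : Fin n))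
               (fun t : Fin s => (⟨b + t.val, by omega⟩ : Fin n))).det

open Matrix in
lemma solidMinor_transpose {F : Type*} [Field F] {n : ℕ} (M : Matrix (Fin n) (Fin n) F)
    (s a b : ℕ) (ha : a + s ≤ n) (hb : b + s ≤ n) :
    solidMinor M.transpose s a b ha hb = solidMinor M s b a hb ha := by
  unfold solidMinor
  rw [← Matrix.transpose_submatrix, Matrix.det_transpose]

lemma initMinor_aux {F : Type*} [Field F] {n : ℕ} (A B : Matrix (Fin n) (Fin n) F)
    (hB : ∀ (s a b : ℕ) (ha : a + s ≤ n) (hb : b + s ≤ n),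
      1 ≤ s → (a = 0 ∨ b = 0) → solidMinor B s a b ha hb ≠ 0)
    (hAB : ∀ (s a b : ℕ) (ha : a + s ≤ n) (hb : b + s ≤ n),
      1 ≤ s → (a = 0 ∨ b = 0) →
      solidMinor A s a b ha hb = solidMinor B s a b ha hb)
    (i j : Fin n) (hij : i.val ≤ j.val)
    (ih : ∀ r c : Fin n, r.val + c.val < i.val + j.val → A r c = B r c) :
    A i j = B i j := by
  have hi : i.val < n := i.isLt
  have hj : j.val < n := j.isLt
  set m := i.val with hm
  set b := j.val - m with hbdef
  have ha1 : 0 + (m + 1) ≤ n := by omega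
  have hb1 : b + (m + 1) ≤ n := by omega
  set f : Fin (m + 1) → Fin n := fun t => ⟨0 + t.val, by omega⟩ with hf
  set g : Fin (m + 1) → Fin n := fun u => ⟨b + u.val, by omega⟩ with hg
  have hfi : f (Fin.last m) = i := Fin.ext (by simp [hf]; exact hm)
  have hgj : g (Fin.last m) = j := Fin.ext (by simp [hg]; omega)
  have hdet : (A.submatrix f g).det = (B.submatrix f g).det :=
    hAB (m + 1) 0 b ha1 hb1 (by omega) (Or.inl rfl)
  set d := A i j - B i j with hd
  have SA_eq : A.submatrix f g =
      Matrix.updateRow (B.submatrix f g) (Fin.last m)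
        (B.submatrix f g (Fin.last m) + Pi.single (Fin.last m) d) := by
    ext t u
    by_cases ht : t = Fin.last m
    · subst ht
      rw [Matrix.updateRow_self]
      by_cases hu : u = Fin.last m
      · subst hu
        simp only [Matrix.submatrix_apply, Pi.add_apply, Pi.single_eq_same, hfi, hgj, hd]
        ring
      · have hu' : u.val < m := Fin.val_lt_last hu
        have := ih (f (Fin.last m)) (g u) (by simp [hf, hg]; omega)
        simp only [Matrix.submatrix_apply, Pi.add_apply, Pi.single_eq_of_ne hu, add_zero]
        exact this
    · rw [Matrix.updateRow_ne ht]
      have ht' : t.val < m := Fin.val_lt_last ht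
      exact ih (f t) (g u) (by simp [hf, hg]; omega)
  rw [SA_eq, Matrix.det_updateRow_add, Matrix.updateRow_eq_self] at hdet
  have h0 : (Matrix.updateRow (B.submatrix f g) (Fin.last m)
      (Pi.single (Fin.last m) d)).det = 0 := add_eq_left.mp hdet
  have hsingle : (Pi.single (Fin.last m) d : Fin (m+1) → F)
      = d • (Pi.single (Fin.last m) 1 : Fin (m+1) → F) := by
    funext u
    by_cases hu : u = Fin.last m
    · subst hu; simp
    · simp [Pi.single_eq_of_ne hu]
  rw [hsingle, Matrix.det_updateRow_smul] at h0
  set C := Matrix.updateRow (B.submatrix f g) (Fin.last m)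
      (Pi.single (Fin.last m) (1:F)) with hC
  have ha2 : 0 + m ≤ n := by omega
  have hb2 : b + m ≤ n := by omega
  have hCdet : C.det = solidMinor B m 0 b ha2 hb2 := by
    rw [Matrix.det_succ_row C (Fin.last m)]
    rw [Finset.sum_eq_single (Fin.last m)]
    · have hone : C (Fin.last m) (Fin.last m) = 1 := by simp [hC]
      have hsign : ((-1 : F)) ^ ((Fin.last m : ℕ) + (Fin.last m : ℕ)) = 1 :=
        Even.neg_one_pow ⟨m, by simp⟩
      rw [hone, hsign, one_mul, one_mul]
      unfold solidMinor
      congr 1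
      ext t u
      simp only [Matrix.submatrix_apply, Fin.succAbove_last, hC]
      rw [Matrix.updateRow_ne (Fin.castSucc_lt_last t).ne]
      rfl
    · intro u _ hu
      have : C (Fin.last m) u = 0 := by
        simp [hC, Pi.single_eq_of_ne hu]
      rw [this]; ring
    · intro h; exact absurd (Finset.mem_univ _) h
  have hne : C.det ≠ 0 := by
    rw [hCdet]
    rcases Nat.eq_zero_or_pos m with h | h
    · haveI : IsEmpty (Fin m) := by rw [h]; infer_instance
      unfold solidMinor
      rw [Matrix.det_isEmpty]
      exact one_ne_zero
    · exact hB m 0 b ha2 hb2 h (Or.inl rfl)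
  have hd0 : d = 0 := by
    rcases mul_eq_zero.mp h0 with h | h
    · exact h
    · exact absurd h hne
  exact sub_eq_zero.mp hd0


/-- A square matrix over a field is uniquely determined by its initial minors
(solid minors containing the first row or the first column), provided all of
these minors are nonzero: if two `n × n` matrices have all initial minors
nonzero and equal, then the matrices are equal. -/
theorem matrix_eq_of_initialMinors_eq {F : Type*} [Field F] {n : ℕ}
    (A B : Matrix (Fin n) (Fin n) F)
    (hA : ∀ (s a b : ℕ) (ha : a + s ≤ n) (hb : b + s ≤ n),
      1 ≤ s → (a = 0 ∨ b = 0) → solidMinor A s a b ha hb ≠ 0)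
    (hB : ∀ (s a b : ℕ) (ha : a + s ≤ n) (hb : b + s ≤ n),
      1 ≤ s → (a = 0 ∨ b = 0) → solidMinor B s a b ha hb ≠ 0)
    (hAB : ∀ (s a b : ℕ) (ha : a + s ≤ n) (hb : b + s ≤ n),
      1 ≤ s → (a = 0 ∨ b = 0) →
      solidMinor A s a b ha hb = solidMinor B s a b ha hb) :
    A = B := by
  have hBT : ∀ (s a b : ℕ) (ha : a + s ≤ n) (hb : b + s ≤ n),
      1 ≤ s → (a = 0 ∨ b = 0) → solidMinor B.transpose s a b ha hb ≠ 0 := by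
    intro s a b ha hb hs hab
    rw [solidMinor_transpose]
    exact hB s b a hb ha hs hab.symm
  have hABT : ∀ (s a b : ℕ) (ha : a + s ≤ n) (hb : b + s ≤ n),
      1 ≤ s → (a = 0 ∨ b = 0) →
      solidMinor A.transpose s a b ha hb = solidMinor B.transpose s a b ha hb := by
    intro s a b ha hb hs hab
    rw [solidMinor_transpose, solidMinor_transpose]
    exact hAB s b a hb ha hs hab.symm
  have key : ∀ k : ℕ, ∀ i j : Fin n, i.val + j.val ≤ k → A i j = B i j := by
    intro k
    induction k with
    | zero =>
      intro i j h
      exact initMinor_aux A B hB hAB i j (by omega) (fun r c hrc => by omega)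
    | succ k ihk =>
      intro i j h
      rcases Nat.lt_or_ge (i.val + j.val) (k + 1) with h' | h'
      · exact ihk i j (by omega)
      · have ih : ∀ r c : Fin n, r.val + c.val < i.val + j.val → A r c = B r c := by
          intro r c hrc
          exact ihk r c (by omega)
        rcases le_or_gt i.val j.val with hij | hij
        · exact initMinor_aux A B hB hAB i j hij ih
        · have ihT : ∀ r c : Fin n, r.val + c.val < j.val + i.val →
              A.transpose r c = B.transpose r c := by
            intro r c hrc
            exact ih c r (by omega)
          exact initMinor_aux A.transpose B.transpose hBT hABT j i (by omega) ihT
  ext i j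
  exact key (i.val + j.val) i j le_rfl
end

section
/- The cones C_T, as T ranges over all plane binary trees with n−1 leaves, have pairwise disjoint interiors and their union is all of R^{n−3}; i.e., they form the maximal cones of a complete simplicial fan in R^{n−3}. -/
/-- A plane binary tree: every vertex has either two ordered children or none. -/
inductive PlaneBinaryTree : Type
  | leaf : PlaneBinaryTree
  | node : PlaneBinaryTree → PlaneBinaryTree → PlaneBinaryTree

namespace PlaneBinaryTree

/-- The number of leaves. -/
def leaves : PlaneBinaryTree → ℕ
  | .leaf => 1
  | .node l r => l.leaves + r.leaves

/-- The number of internal vertices. -/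
def ic : PlaneBinaryTree → ℕ
  | .leaf => 0
  | .node l r => l.ic + r.ic + 1

/-- The label of the root of a tree whose internal vertices are labeled
`o+1, …, o+ic` in the order of the first time one drops down to them from a
child in a left-to-right depth-first search (i.e. in in-order). -/
def rootLab : PlaneBinaryTree → ℕ → ℕ
  | .leaf, o => o
  | .node l _, o => o + l.ic + 1

/-- The set of parent-child pairs `(i, j)` of labels of internal vertices,
where `i` is the label of the parent and `j` that of the child, for the
labeling of internal vertices by `o+1, …, o+ic` in in-order. -/
def pairs : PlaneBinaryTree → ℕ → Finset (ℕ × ℕ)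
  | .leaf, _ => ∅
  | .node l r, o =>
      pairs l o ∪ pairs r (o + l.ic + 1) ∪
        (match l with
          | .leaf => ∅
          | .node l₁ l₂ => {(o + l.ic + 1, rootLab (PlaneBinaryTree.node l₁ l₂) o)}) ∪
        (match r with
          | .leaf => ∅
          | .node r₁ r₂ => {(o + l.ic + 1, rootLab (PlaneBinaryTree.node r₁ r₂) (o + l.ic + 1))})

end PlaneBinaryTree

/-- The `t`-th coordinate (`1`-indexed) of a point of `ℝ^{n-3}`. -/
def coord {m : ℕ} (x : Fin m → ℝ) (t : ℕ) : ℝ :=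
  if h : t - 1 < m then x ⟨t - 1, h⟩ else 0

/-- The Stanley–Pitman cone `C_T ⊆ ℝ^{n-3}` of a plane binary tree `T` with
`n−1` leaves: for each parent-child pair `(i,j)` of internal vertices, impose
`x_i + ⋯ + x_{j-1} ≥ 0` if `i < j` and `x_j + ⋯ + x_{i-1} ≤ 0` if `i > j`. -/
def spCone (n : ℕ) (T : PlaneBinaryTree) : Set (Fin (n - 3) → ℝ) :=
  {x | ∀ p ∈ T.pairs 0,
    if p.1 < p.2 then 0 ≤ ∑ t ∈ Finset.Icc p.1 (p.2 - 1), coord x t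
    else ∑ t ∈ Finset.Icc p.2 (p.1 - 1), coord x t ≤ 0}

open PlaneBinaryTree

/-! ### Combinatorial lemmas -/

lemma SP.leaves_eq (T : PlaneBinaryTree) : T.leaves = T.ic + 1 := by
  induction T with
  | leaf => rfl
  | node l r ihl ihr => simp only [leaves, ic, ihl, ihr]; omega

lemma SP.pairs_bounds : ∀ (T : PlaneBinaryTree) (o : ℕ) (p : ℕ × ℕ), p ∈ T.pairs o →
    (o + 1 ≤ p.1 ∧ p.1 ≤ o + T.ic) ∧ (o + 1 ≤ p.2 ∧ p.2 ≤ o + T.ic) ∧ p.1 ≠ p.2 := by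
  intro T
  induction T with
  | leaf => intro o p hp; simp [pairs] at hp
  | node l r ihl ihr =>
    intro o p hp
    have hic : (node l r).ic = l.ic + r.ic + 1 := rfl
    simp only [pairs, Finset.mem_union] at hp
    rcases hp with ((hp | hp) | hp) | hp
    · have := ihl o p hp; omega
    · have := ihr (o + l.ic + 1) p hp; omega
    · cases l with
      | leaf => simp at hp
      | node l₁ l₂ =>
        simp only [Finset.mem_singleton] at hp
        subst hp
        simp only [rootLab, ic]
        refine ⟨⟨by omega, by omega⟩, ⟨by omega, by omega⟩, by omega⟩
    · cases r with
      | leaf => simp at hp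
      | node r₁ r₂ =>
        simp only [Finset.mem_singleton] at hp
        subst hp
        simp only [rootLab, ic]
        omega

lemma SP.pairs_node_left_subset (l r : PlaneBinaryTree) (o : ℕ) :
    l.pairs o ⊆ (node l r).pairs o := by
  intro p hp; simp only [pairs, Finset.mem_union]; tauto

lemma SP.pairs_node_right_subset (l r : PlaneBinaryTree) (o : ℕ) :
    r.pairs (o + l.ic + 1) ⊆ (node l r).pairs o := by
  intro p hp; simp only [pairs, Finset.mem_union]; tauto

lemma SP.ic_eq_zero {T : PlaneBinaryTree} (h : T.ic = 0) : T = .leaf := by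
  cases T with
  | leaf => rfl
  | node l r => simp [ic] at h

lemma SP.exists_heap (y : ℕ → ℝ) : ∀ m o, ∃ T : PlaneBinaryTree,
    T.ic = m ∧ ∀ p ∈ T.pairs o, y p.1 ≤ y p.2 := by
  intro m
  induction m using Nat.strong_induction_on with
  | _ m ih =>
    intro o
    match m with
    | 0 => exact ⟨.leaf, rfl, by simp [pairs]⟩
    | (m+1) =>
      obtain ⟨k, hk, hkmin⟩ := Finset.exists_min_image (Finset.Icc (o+1) (o+(m+1))) y
        ⟨o+1, by simp⟩
      rw [Finset.mem_Icc] at hk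
      obtain ⟨l, hl, hlh⟩ := ih (k - o - 1) (by omega) o
      obtain ⟨r, hr, hrh⟩ := ih (o + (m+1) - k) (by omega) k
      have hok : o + l.ic + 1 = k := by omega
      refine ⟨.node l r, by simp only [ic]; omega, ?_⟩
      intro p hp
      simp only [pairs, Finset.mem_union] at hp
      rcases hp with ((hp | hp) | hp) | hp
      · exact hlh p hp
      · rw [hok] at hp; exact hrh p hp
      · cases l with
        | leaf => simp at hp
        | node l₁ l₂ =>
          simp only [Finset.mem_singleton] at hp
          subst hp
          simp only [hok]
          apply hkmin
          rw [Finset.mem_Icc]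
          simp only [rootLab, ic] at hl ⊢
          omega
      · cases r with
        | leaf => simp at hp
        | node r₁ r₂ =>
          simp only [Finset.mem_singleton] at hp
          subst hp
          simp only [hok]
          apply hkmin
          rw [Finset.mem_Icc]
          simp only [rootLab, ic] at hr ⊢
          omega

lemma SP.root_edge_left (l₁ l₂ r : PlaneBinaryTree) (o : ℕ) :
    (o + (node l₁ l₂).ic + 1, rootLab (node l₁ l₂) o) ∈ (node (node l₁ l₂) r).pairs o := by
  simp only [pairs, Finset.mem_union, Finset.mem_singleton]; tauto

lemma SP.root_edge_right (l r₁ r₂ : PlaneBinaryTree) (o : ℕ) :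
    (o + l.ic + 1, rootLab (node r₁ r₂) (o + l.ic + 1)) ∈ (node l (node r₁ r₂)).pairs o := by
  simp only [pairs, Finset.mem_union, Finset.mem_singleton]; tauto

lemma SP.sheap_root_lt (y : ℕ → ℝ) :
    ∀ (T : PlaneBinaryTree) (o : ℕ), (∀ p ∈ T.pairs o, y p.1 < y p.2) →
      ∀ k, o + 1 ≤ k → k ≤ o + T.ic → k ≠ rootLab T o → y (rootLab T o) < y k := by
  intro T
  induction T with
  | leaf => intro o _ k h1 h2 _; simp [ic] at h2; omega
  | node l r ihl ihr =>
    intro o hs k h1 h2 hne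
    simp only [rootLab] at hne ⊢
    rcases lt_or_ge k (o + l.ic + 1) with hkl | hkl
    · cases l with
      | leaf => simp [ic] at hkl; omega
      | node l₁ l₂ =>
        have hroot : y (o + (node l₁ l₂).ic + 1) < y (rootLab (node l₁ l₂) o) :=
          hs _ (SP.root_edge_left l₁ l₂ r o)
        rcases eq_or_ne k (rootLab (node l₁ l₂) o) with hk | hk
        · rw [hk]; exact hroot
        · exact hroot.trans (ihl o (fun p hp => hs p (SP.pairs_node_left_subset _ _ _ hp))
            k h1 (by omega) hk)
    · have hkl' : o + l.ic + 1 < k := by omega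
      cases r with
      | leaf => simp [ic] at h2; omega
      | node r₁ r₂ =>
        have hroot : y (o + l.ic + 1) < y (rootLab (node r₁ r₂) (o + l.ic + 1)) :=
          hs _ (SP.root_edge_right l r₁ r₂ o)
        rcases eq_or_ne k (rootLab (node r₁ r₂) (o + l.ic + 1)) with hk | hk
        · rw [hk]; exact hroot
        · refine hroot.trans (ihr (o + l.ic + 1)
            (fun p hp => hs p (SP.pairs_node_right_subset _ _ _ hp)) k (by omega) ?_ hk)
          simp only [ic] at h2 ⊢; omega

lemma SP.sheap_unique (y : ℕ → ℝ) :
    ∀ (T T' : PlaneBinaryTree) (o : ℕ), T.ic = T'.ic →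
      (∀ p ∈ T.pairs o, y p.1 < y p.2) → (∀ p ∈ T'.pairs o, y p.1 < y p.2) → T = T' := by
  intro T
  induction T with
  | leaf =>
    intro T' o hic _ _
    exact (SP.ic_eq_zero hic.symm).symm
  | node l r ihl ihr =>
    intro T' o hic hs hs'
    cases T' with
    | leaf => simp [ic] at hic
    | node l' r' =>
      have hroot : rootLab (node l r) o = rootLab (node l' r') o := by
        by_contra hne
        have h1 := SP.sheap_root_lt y (node l r) o hs (rootLab (node l' r') o)
          (by simp only [rootLab]; omega) (by simp only [rootLab, ic] at hic ⊢; omega)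
          (Ne.symm hne)
        have h2 := SP.sheap_root_lt y (node l' r') o hs' (rootLab (node l r) o)
          (by simp only [rootLab]; omega) (by simp only [rootLab, ic] at hic ⊢; omega) hne
        linarith
      simp only [rootLab] at hroot
      have hlic : l.ic = l'.ic := by omega
      have hric : r.ic = r'.ic := by simp only [ic] at hic; omega
      have hl := ihl l' o hlic (fun p hp => hs p (SP.pairs_node_left_subset _ _ _ hp))
        (fun p hp => hs' p (SP.pairs_node_left_subset _ _ _ hp))
      have hr := ihr r' (o + l.ic + 1) hric
        (fun p hp => hs p (SP.pairs_node_right_subset _ _ _ hp))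
        (fun p hp => hs' p (SP.pairs_node_right_subset _ _ _ (by rw [← hlic]; exact hp)))
      rw [hl, hr]

/-! ### Analytic lemmas -/

noncomputable def SP.psum {m : ℕ} (x : Fin m → ℝ) (t : ℕ) : ℝ :=
  ∑ s ∈ Finset.Ico 1 t, coord x s

lemma SP.coord_add {m : ℕ} (x y : Fin m → ℝ) (t : ℕ) :
    coord (x + y) t = coord x t + coord y t := by
  unfold coord; split <;> simp

lemma SP.coord_smul {m : ℕ} (c : ℝ) (x : Fin m → ℝ) (t : ℕ) :
    coord (c • x) t = c * coord x t := by
  unfold coord; split <;> simp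

lemma SP.coord_continuous {m : ℕ} (t : ℕ) : Continuous fun x : Fin m → ℝ => coord x t := by
  unfold coord; split
  · exact continuous_apply _
  · exact continuous_const

lemma SP.psum_add {m : ℕ} (x y : Fin m → ℝ) (t : ℕ) :
    SP.psum (x + y) t = SP.psum x t + SP.psum y t := by
  unfold SP.psum
  rw [← Finset.sum_add_distrib]
  exact Finset.sum_congr rfl fun s _ => SP.coord_add x y s

lemma SP.psum_smul {m : ℕ} (c : ℝ) (x : Fin m → ℝ) (t : ℕ) :
    SP.psum (c • x) t = c * SP.psum x t := by
  unfold SP.psum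
  rw [Finset.mul_sum]
  exact Finset.sum_congr rfl fun s _ => SP.coord_smul c x s

lemma SP.sum_Icc_eq {m : ℕ} (x : Fin m → ℝ) {i j : ℕ} (h1 : 1 ≤ i) (h : i ≤ j) :
    ∑ t ∈ Finset.Icc i (j - 1), coord x t = SP.psum x j - SP.psum x i := by
  have he : Finset.Icc i (j - 1) = Finset.Ico i j := by
    rw [← Finset.Ico_add_one_right_eq_Icc]; congr 1; omega
  rw [he]
  have := Finset.sum_Ico_consecutive (fun t => coord x t) h1 h
  unfold SP.psum; linarith

lemma SP.coord_update {m : ℕ} (x : Fin m → ℝ) {a : ℕ} (ha1 : 1 ≤ a) (ha : a - 1 < m) (c : ℝ) :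
    ∀ t, 1 ≤ t →
      coord (Function.update x ⟨a - 1, ha⟩ (x ⟨a - 1, ha⟩ + c)) t =
        coord x t + (if t = a then c else 0) := by
  intro t ht
  unfold coord
  by_cases hta : t = a
  · subst hta
    simp [dif_pos ha, Function.update_self]
  · rw [if_neg hta]
    split
    · rw [Function.update_of_ne (fun hcon => hta (by
        have : t - 1 = a - 1 := congrArg Fin.val hcon
        omega))]
      ring
    · ring

lemma SP.psum_update {m : ℕ} (x : Fin m → ℝ) {a : ℕ} (ha1 : 1 ≤ a) (ha : a - 1 < m) (c : ℝ)
    (t : ℕ) :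
    SP.psum (Function.update x ⟨a - 1, ha⟩ (x ⟨a - 1, ha⟩ + c)) t =
      SP.psum x t + (if a < t then c else 0) := by
  unfold SP.psum
  rw [Finset.sum_congr rfl (fun s hs => SP.coord_update x ha1 ha c s (Finset.mem_Ico.mp hs).1)]
  rw [Finset.sum_add_distrib]
  congr 1
  rw [Finset.sum_ite_eq' (Finset.Ico 1 t) a (fun _ => c)]
  simp only [Finset.mem_Ico]
  by_cases h : a < t
  · rw [if_pos ⟨ha1, h⟩, if_pos h]
  · rw [if_neg (fun hc => h hc.2), if_neg h]

lemma SP.dist_update {m : ℕ} (x : Fin m → ℝ) (i : Fin m) (c : ℝ) :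
    dist (Function.update x i (x i + c)) x ≤ |c| := by
  rw [dist_pi_le_iff (abs_nonneg c)]
  intro j
  by_cases hj : j = i
  · subst hj; simp [Function.update_self, Real.dist_eq]
  · rw [Function.update_of_ne hj]; simp [abs_nonneg]

lemma SP.mem_spCone_iff (n : ℕ) (T : PlaneBinaryTree) (x : Fin (n - 3) → ℝ) :
    x ∈ spCone n T ↔ ∀ p ∈ T.pairs 0, SP.psum x p.1 ≤ SP.psum x p.2 := by
  unfold spCone
  rw [Set.mem_setOf_eq]
  apply forall₂_congr
  intro p hp
  obtain ⟨⟨h11, h12⟩, ⟨h21, h22⟩, hne⟩ := SP.pairs_bounds T 0 p hp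
  by_cases h : p.1 < p.2
  · rw [if_pos h, SP.sum_Icc_eq x h11 (le_of_lt h)]
    constructor <;> intro <;> linarith
  · rw [if_neg h, SP.sum_Icc_eq x h21 (by omega)]
    constructor <;> intro <;> linarith

lemma SP.interior_strict (n : ℕ) (hn : 3 ≤ n) (T : PlaneBinaryTree) (hT : T.ic = n - 2)
    (x : Fin (n - 3) → ℝ) (hx : x ∈ interior (spCone n T)) :
    ∀ p ∈ T.pairs 0, SP.psum x p.1 < SP.psum x p.2 := by
  rw [mem_interior_iff_mem_nhds, Metric.mem_nhds_iff] at hx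
  obtain ⟨ε, hε, hball⟩ := hx
  intro p hp
  obtain ⟨⟨h11, h12⟩, ⟨h21, h22⟩, hne⟩ := SP.pairs_bounds T 0 p hp
  rw [hT] at h12 h22
  by_cases h : p.1 < p.2
  · -- decrease coordinate p.1 by ε/2
    have ha : p.1 - 1 < n - 3 := by omega
    set x' := Function.update x ⟨p.1 - 1, ha⟩ (x ⟨p.1 - 1, ha⟩ + (-(ε/2))) with hx'def
    have hmem : x' ∈ spCone n T := by
      apply hball
      rw [Metric.mem_ball]
      calc dist x' x ≤ |(-(ε/2))| := SP.dist_update x _ _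
        _ < ε := by rw [abs_neg, abs_of_pos (by linarith)]; linarith
    have := (SP.mem_spCone_iff n T x').mp hmem p hp
    rw [SP.psum_update x (by omega) ha _ p.1, SP.psum_update x (by omega) ha _ p.2,
      if_neg (lt_irrefl p.1), if_pos h] at this
    linarith
  · have h' : p.2 < p.1 := by omega
    have ha : p.2 - 1 < n - 3 := by omega
    set x' := Function.update x ⟨p.2 - 1, ha⟩ (x ⟨p.2 - 1, ha⟩ + (ε/2)) with hx'def
    have hmem : x' ∈ spCone n T := by
      apply hball
      rw [Metric.mem_ball]
      calc dist x' x ≤ |(ε/2)| := SP.dist_update x _ _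
        _ < ε := by rw [abs_of_pos (by linarith)]; linarith
    have := (SP.mem_spCone_iff n T x').mp hmem p hp
    rw [SP.psum_update x (by omega) ha _ p.1, SP.psum_update x (by omega) ha _ p.2,
      if_neg (lt_irrefl p.2), if_pos h'] at this
    linarith

lemma SP.smul_mem (n : ℕ) (T : PlaneBinaryTree) (c : ℝ) (x : Fin (n - 3) → ℝ)
    (hc : 0 ≤ c) (hx : x ∈ spCone n T) : c • x ∈ spCone n T := by
  rw [SP.mem_spCone_iff] at hx ⊢
  intro p hp
  rw [SP.psum_smul, SP.psum_smul]
  exact mul_le_mul_of_nonneg_left (hx p hp) hc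

lemma SP.add_mem (n : ℕ) (T : PlaneBinaryTree) (x y : Fin (n - 3) → ℝ)
    (hx : x ∈ spCone n T) (hy : y ∈ spCone n T) : x + y ∈ spCone n T := by
  rw [SP.mem_spCone_iff] at hx hy ⊢
  intro p hp
  rw [SP.psum_add, SP.psum_add]
  exact add_le_add (hx p hp) (hy p hp)

lemma SP.isClosed (n : ℕ) (T : PlaneBinaryTree) : IsClosed (spCone n T) := by
  have : spCone n T = ⋂ p ∈ T.pairs 0,
      {x : Fin (n - 3) → ℝ |
        if p.1 < p.2 then 0 ≤ ∑ t ∈ Finset.Icc p.1 (p.2 - 1), coord x t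
        else ∑ t ∈ Finset.Icc p.2 (p.1 - 1), coord x t ≤ 0} := by
    ext x
    simp only [spCone, Set.mem_setOf_eq, Set.mem_iInter]
  rw [this]
  refine isClosed_biInter fun p _ => ?_
  by_cases h : p.1 < p.2
  · simp only [if_pos h]
    exact isClosed_le continuous_const
      (continuous_finset_sum _ fun t _ => SP.coord_continuous t)
  · simp only [if_neg h]
    exact isClosed_le (continuous_finset_sum _ fun t _ => SP.coord_continuous t)
      continuous_const

/-- The cones `C_T`, as `T` ranges over all plane binary trees with `n−1`
leaves, are the maximal cones of a complete simplicial fan in `ℝ^{n-3}`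
(the Stanley–Pitman fan): each `C_T` is a closed convex cone, their union is
all of `ℝ^{n-3}`, and distinct cones have disjoint interiors. -/
theorem stanleyPitman_cones_form_complete_fan (n : ℕ) (hn : 3 ≤ n) :
    (∀ T : PlaneBinaryTree, T.leaves = n - 1 →
      IsClosed (spCone n T) ∧ Convex ℝ (spCone n T) ∧
        ∀ (c : ℝ) (x : Fin (n - 3) → ℝ), 0 ≤ c → x ∈ spCone n T →
          c • x ∈ spCone n T) ∧
    (⋃ T : {T : PlaneBinaryTree // T.leaves = n - 1}, spCone n T.1) = Set.univ ∧
    (∀ T T' : PlaneBinaryTree, T.leaves = n - 1 → T'.leaves = n - 1 → T ≠ T' →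
      interior (spCone n T) ∩ interior (spCone n T') = ∅) := by
  refine ⟨?_, ?_, ?_⟩
  · intro T _
    refine ⟨SP.isClosed n T, ?_, fun c x hc hx => SP.smul_mem n T c x hc hx⟩
    intro x hx y hy a b ha hb hab
    exact SP.add_mem n T _ _ (SP.smul_mem n T a x ha hx) (SP.smul_mem n T b y hb hy)
  · rw [Set.eq_univ_iff_forall]
    intro x
    obtain ⟨T, hTic, hTh⟩ := SP.exists_heap (SP.psum x) (n - 2) 0
    rw [Set.mem_iUnion]
    refine ⟨⟨T, by rw [SP.leaves_eq, hTic]; omega⟩, ?_⟩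
    rw [SP.mem_spCone_iff]
    exact hTh
  · intro T T' hT hT' hne
    rw [Set.eq_empty_iff_forall_notMem]
    intro x ⟨hx1, hx2⟩
    have hTic : T.ic = n - 2 := by have := SP.leaves_eq T; omega
    have hT'ic : T'.ic = n - 2 := by have := SP.leaves_eq T'; omega
    exact hne (SP.sheap_unique (SP.psum x) T T' 0 (by omega)
      (SP.interior_strict n hn T hTic x hx1)
      (SP.interior_strict n hn T' hT'ic x hx2))
end

section
/- For each i with 1 ≤ i ≤ n−2, the region D_i = { x ∈ R^{n−3} : x_1 + ... + x_{i−1} = min(0, x_1, x_1+x_2, ..., x_1+...+x_{n−3}) } equals the union of the cones C_T over all plane binary trees T with n−1 leaves whose root is labeled i. -/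
/-- The partial sum `x_1 + ⋯ + x_m` (with the empty sum `0` for `m = 0`). -/
def partialSum {m : ℕ} (x : Fin m → ℝ) (l : ℕ) : ℝ :=
  ∑ t ∈ Finset.Icc 1 l, coord x t

namespace SP

open PlaneBinaryTree Finset

lemma leaves_eq_s8 : ∀ T : PlaneBinaryTree, T.leaves = T.ic + 1
  | .leaf => rfl
  | .node l r => by
      simp only [PlaneBinaryTree.leaves, PlaneBinaryTree.ic, leaves_eq_s8 l, leaves_eq_s8 r]; omega

lemma pairs_bounds_s8 : ∀ (T : PlaneBinaryTree) (o : ℕ), ∀ p ∈ T.pairs o,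
    o + 1 ≤ p.1 ∧ p.1 ≤ o + T.ic ∧ o + 1 ≤ p.2 ∧ p.2 ≤ o + T.ic := by
  intro T
  induction T with
  | leaf => intro o p hp; simp [PlaneBinaryTree.pairs] at hp
  | node l r ihl ihr =>
    intro o p hp
    simp only [PlaneBinaryTree.pairs, Finset.mem_union] at hp
    have hic : (PlaneBinaryTree.node l r).ic = l.ic + r.ic + 1 := rfl
    rcases hp with ((hp | hp) | hp) | hp
    · have := ihl o p hp; omega
    · have := ihr (o + l.ic + 1) p hp; omega
    · cases l with
      | leaf => simp at hp
      | node l1 l2 =>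
        simp at hp
        have h1 : (PlaneBinaryTree.node l1 l2).rootLab o = o + l1.ic + 1 := rfl
        have h2 : (PlaneBinaryTree.node l1 l2).ic = l1.ic + l2.ic + 1 := rfl
        rcases hp with ⟨h3, h4⟩
        omega
    · cases r with
      | leaf => simp at hp
      | node r1 r2 =>
        simp at hp
        have h1 : (PlaneBinaryTree.node r1 r2).rootLab (o + l.ic + 1) = o + l.ic + 1 + r1.ic + 1 := rfl
        have h2 : (PlaneBinaryTree.node r1 r2).ic = r1.ic + r2.ic + 1 := rfl
        rcases hp with ⟨h3, h4⟩
        omega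

lemma sound : ∀ (T : PlaneBinaryTree) (o : ℕ) (S : ℕ → ℝ),
    (∀ p ∈ T.pairs o, S (p.1 - 1) ≤ S (p.2 - 1)) →
    ∀ v, o + 1 ≤ v → v ≤ o + T.ic → S (T.rootLab o - 1) ≤ S (v - 1) := by
  intro T
  induction T with
  | leaf => intro o S hx v h1 h2; simp [PlaneBinaryTree.ic] at h2; omega
  | node l r ihl ihr =>
    intro o S hx v h1 h2
    have hic : (PlaneBinaryTree.node l r).ic = l.ic + r.ic + 1 := rfl
    have hroot : (PlaneBinaryTree.node l r).rootLab o = o + l.ic + 1 := rfl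
    rw [hroot]
    have hxl : ∀ p ∈ l.pairs o, S (p.1 - 1) ≤ S (p.2 - 1) := by
      intro p hp; exact hx p (by simp [PlaneBinaryTree.pairs]; tauto)
    have hxr : ∀ p ∈ r.pairs (o + l.ic + 1), S (p.1 - 1) ≤ S (p.2 - 1) := by
      intro p hp; exact hx p (by simp [PlaneBinaryTree.pairs]; tauto)
    rcases lt_trichotomy v (o + l.ic + 1) with hv | hv | hv
    · -- v in left subtree labels
      cases l with
      | leaf => simp [PlaneBinaryTree.ic] at hv; omega
      | node l1 l2 =>
        have hpair : (o + (PlaneBinaryTree.node l1 l2).ic + 1,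
            (PlaneBinaryTree.node l1 l2).rootLab o) ∈ (PlaneBinaryTree.node (PlaneBinaryTree.node l1 l2) r).pairs o := by
          simp [PlaneBinaryTree.pairs]
        have h5 := hx _ hpair
        have h6 := ihl o S hxl v h1 (by simp [PlaneBinaryTree.ic] at hv ⊢; omega)
        exact le_trans h5 h6
    · rw [hv]
    · -- v in right subtree
      cases r with
      | leaf => simp [PlaneBinaryTree.ic] at h2; omega
      | node r1 r2 =>
        have hpair : (o + l.ic + 1,
            (PlaneBinaryTree.node r1 r2).rootLab (o + l.ic + 1)) ∈ (PlaneBinaryTree.node l (PlaneBinaryTree.node r1 r2)).pairs o := by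
          simp [PlaneBinaryTree.pairs]
        have h5 := hx _ hpair
        have h6 := ihr (o + l.ic + 1) S hxr v (by omega) (by simp [PlaneBinaryTree.ic] at h2 ⊢; omega)
        exact le_trans h5 h6

noncomputable def argmin (S : ℕ → ℝ) : ℕ → ℕ → ℕ
  | a, 0 => a
  | a, k+1 => if S a ≤ S (argmin S (a+1) k) then a else argmin S (a+1) k
  termination_by a k => k

lemma argmin_mem (S : ℕ → ℝ) : ∀ (k a : ℕ), a ≤ argmin S a k ∧ argmin S a k ≤ a + k := by
  intro k
  induction k with
  | zero => intro a; simp [argmin]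
  | succ k ih =>
    intro a
    have := ih (a+1)
    rw [argmin]
    split <;> omega

lemma argmin_min (S : ℕ → ℝ) : ∀ (k a m : ℕ), a ≤ m → m ≤ a + k → S (argmin S a k) ≤ S m := by
  intro k
  induction k with
  | zero =>
    intro a m h1 h2
    have : m = a := by omega
    subst this; simp [argmin]
  | succ k ih =>
    intro a m h1 h2
    rcases Nat.eq_or_lt_of_le h1 with h | h
    · subst h
      rw [argmin]; split
      · exact le_rfl
      · next hs => linarith [ih (a+1) (argmin S (a+1) k) (argmin_mem S k (a+1)).1 (by have := argmin_mem S k (a+1); omega)]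
    · have hm := ih (a+1) m h (by omega)
      rw [argmin]; split
      · next hs => linarith
      · exact hm

noncomputable def build (S : ℕ → ℝ) : ℕ → ℕ → PlaneBinaryTree
  | _, 0 => .leaf
  | a, k+1 =>
      .node (build S a (argmin S a k - a)) (build S (argmin S a k + 1) (a + k - argmin S a k))
  termination_by a k => k
  decreasing_by
  · have := argmin_mem S k a; omega
  · have := argmin_mem S k a; omega

lemma build_node (S : ℕ → ℝ) (a k : ℕ) :
    build S a (k+1) = PlaneBinaryTree.node (build S a (argmin S a k - a))
      (build S (argmin S a k + 1) (a + k - argmin S a k)) := by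
  rw [build]

lemma build_ic (S : ℕ → ℝ) : ∀ (k a : ℕ), (build S a k).ic = k := by
  intro k
  induction k using Nat.strong_induction_on with
  | _ k ih =>
    intro a
    match k with
    | 0 => simp [build, PlaneBinaryTree.ic]
    | k+1 =>
      have hm := argmin_mem S k a
      rw [build_node]
      have h1 := ih (argmin S a k - a) (by omega) a
      have h2 := ih (a + k - argmin S a k) (by omega) (argmin S a k + 1)
      simp only [PlaneBinaryTree.ic, h1, h2]
      omega

lemma rootLab_build (S : ℕ → ℝ) (a k : ℕ) :
    (build S a (k+1)).rootLab a = argmin S a k + 1 := by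
  have hm := argmin_mem S k a
  rw [build_node]
  simp only [PlaneBinaryTree.rootLab, build_ic]
  omega

lemma build_leaf (S : ℕ → ℝ) (a : ℕ) : build S a 0 = PlaneBinaryTree.leaf := by rw [build]

lemma mem_pairs_node {l r : PlaneBinaryTree} {o : ℕ} {p : ℕ × ℕ}
    (hp : p ∈ (PlaneBinaryTree.node l r).pairs o) :
    p ∈ l.pairs o ∨ p ∈ r.pairs (o + l.ic + 1) ∨
      (l.ic ≠ 0 ∧ p = (o + l.ic + 1, l.rootLab o)) ∨
      (r.ic ≠ 0 ∧ p = (o + l.ic + 1, r.rootLab (o + l.ic + 1))) := by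
  cases l <;> cases r <;>
    simp_all [PlaneBinaryTree.pairs, PlaneBinaryTree.ic, PlaneBinaryTree.rootLab] <;> tauto

lemma build_sound (S : ℕ → ℝ) :
    ∀ (k a : ℕ), ∀ p ∈ (build S a k).pairs a, S (p.1 - 1) ≤ S (p.2 - 1) := by
  intro k
  induction k using Nat.strong_induction_on with
  | _ k ih =>
    intro a p hp
    match k with
    | 0 =>
      rw [build_leaf] at hp
      simp [PlaneBinaryTree.pairs] at hp
    | k+1 =>
      have hm := argmin_mem S k a
      have hmin := argmin_min S k a
      rw [build_node] at hp
      have hLic : (build S a (argmin S a k - a)).ic = argmin S a k - a := build_ic S _ a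
      rcases mem_pairs_node hp with h | h | ⟨hne, rfl⟩ | ⟨hne, rfl⟩
      · exact ih _ (by omega) a p h
      · rw [hLic, show a + (argmin S a k - a) + 1 = argmin S a k + 1 from by omega] at h
        exact ih _ (by omega) _ p h
      · dsimp only
        rw [hLic] at hne ⊢
        obtain ⟨m, hm'⟩ : ∃ m, argmin S a k - a = m + 1 := ⟨argmin S a k - a - 1, by omega⟩
        rw [hm', rootLab_build]
        have hA := argmin_mem S m a
        rw [show a + (m + 1) + 1 - 1 = argmin S a k from by omega,
          show argmin S a m + 1 - 1 = argmin S a m from by omega]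
        exact hmin (argmin S a m) (by omega) (by omega)
      · dsimp only
        rw [hLic]
        have hRic : (build S (argmin S a k + 1) (a + k - argmin S a k)).ic
            = a + k - argmin S a k := build_ic S _ _
        rw [hRic] at hne
        obtain ⟨m, hm'⟩ : ∃ m, a + k - argmin S a k = m + 1 := ⟨a + k - argmin S a k - 1, by omega⟩
        rw [show a + (argmin S a k - a) + 1 = argmin S a k + 1 from by omega]
        rw [hm', rootLab_build]
        have hA := argmin_mem S m (argmin S a k + 1)
        rw [show argmin S a k + 1 - 1 = argmin S a k from by omega,
          show argmin S (argmin S a k + 1) m + 1 - 1 = argmin S (argmin S a k + 1) m from by omega]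
        exact hmin _ (by omega) (by omega)

lemma partialSum_add {m : ℕ} (x : Fin m → ℝ) {a b : ℕ} (h : a ≤ b) :
    partialSum x b = partialSum x a + ∑ t ∈ Finset.Icc (a+1) b, coord x t := by
  unfold partialSum
  rw [show (1 : ℕ) = 0 + 1 from rfl, Finset.Icc_add_one_left_eq_Ioc, Finset.Icc_add_one_left_eq_Ioc, zero_add, Finset.Icc_add_one_left_eq_Ioc,
    ← Finset.sum_Ioc_consecutive _ (Nat.zero_le a) h]

lemma cone_iff {m : ℕ} (x : Fin m → ℝ) (p : ℕ × ℕ) (h1 : 1 ≤ p.1) (h2 : 1 ≤ p.2) :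
    (if p.1 < p.2 then 0 ≤ ∑ t ∈ Finset.Icc p.1 (p.2 - 1), coord x t
     else (∑ t ∈ Finset.Icc p.2 (p.1 - 1), coord x t) ≤ 0) ↔
    partialSum x (p.1 - 1) ≤ partialSum x (p.2 - 1) := by
  split
  · next h =>
    have hs := partialSum_add x (show p.1 - 1 ≤ p.2 - 1 from by omega)
    rw [show p.1 - 1 + 1 = p.1 from by omega] at hs
    constructor <;> intro h' <;> linarith
  · next h =>
    rcases Nat.lt_or_ge p.2 p.1 with h' | h'
    · have hs := partialSum_add x (show p.2 - 1 ≤ p.1 - 1 from by omega)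
      rw [show p.2 - 1 + 1 = p.2 from by omega] at hs
      constructor <;> intro h'' <;> linarith
    · have : p.1 = p.2 := by omega
      rw [this, show Finset.Icc p.2 (p.2 - 1) = ∅ from Finset.Icc_eq_empty (by omega)]
      simp

end SP

/-- For `1 ≤ i ≤ n−2`, the region
`D_i = { x ∈ ℝ^{n-3} : x_1+⋯+x_{i-1} = min(0, x_1, x_1+x_2, …, x_1+⋯+x_{n-3}) }`
equals the union of the Stanley–Pitman cones `C_T` over all plane binary trees
`T` with `n−1` leaves whose root has label `i`. -/
theorem Di_eq_union_cones_with_root_i (n : ℕ) (hn : 3 ≤ n)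
    (i : ℕ) (hi1 : 1 ≤ i) (hi2 : i ≤ n - 2) :
    {x : Fin (n - 3) → ℝ | ∀ m ≤ n - 3, partialSum x (i - 1) ≤ partialSum x m} =
      ⋃ T : {T : PlaneBinaryTree // T.leaves = n - 1 ∧ T.rootLab 0 = i},
        spCone n T.1 := by
  ext x
  simp only [Set.mem_setOf_eq, Set.mem_iUnion]
  constructor
  · intro hx
    set S : ℕ → ℝ := partialSum x with hS
    refine ⟨⟨PlaneBinaryTree.node (SP.build S 0 (i-1)) (SP.build S i (n-2-i)), ?_, ?_⟩, ?_⟩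
    · rw [SP.leaves_eq_s8]
      simp only [PlaneBinaryTree.ic, SP.build_ic]
      omega
    · simp only [PlaneBinaryTree.rootLab, SP.build_ic]
      omega
    · intro p hp
      have hb := SP.pairs_bounds_s8 _ 0 p hp
      rw [SP.cone_iff x p (by omega) (by omega)]
      rcases SP.mem_pairs_node hp with h | h | ⟨hne, rfl⟩ | ⟨hne, rfl⟩
      · exact SP.build_sound S (i-1) 0 p h
      · rw [SP.build_ic, show 0 + (i - 1) + 1 = i from by omega] at h
        exact SP.build_sound S (n-2-i) i p h
      · dsimp only
        rw [SP.build_ic] at hne ⊢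
        obtain ⟨m, hm'⟩ : ∃ m, i - 1 = m + 1 := ⟨i - 2, by omega⟩
        rw [hm', SP.rootLab_build]
        have hA := SP.argmin_mem S m 0
        rw [show 0 + (m + 1) + 1 - 1 = i - 1 from by omega,
          show SP.argmin S 0 m + 1 - 1 = SP.argmin S 0 m from by omega]
        exact hx (SP.argmin S 0 m) (by omega)
      · dsimp only
        rw [SP.build_ic, show 0 + (i - 1) + 1 = i from by omega]
        have hRic : (SP.build S i (n-2-i)).ic = n - 2 - i := SP.build_ic S _ _
        rw [hRic] at hne
        obtain ⟨m, hm'⟩ : ∃ m, n - 2 - i = m + 1 := ⟨n - 2 - i - 1, by omega⟩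
        rw [hm', SP.rootLab_build]
        have hA := SP.argmin_mem S m i
        rw [show SP.argmin S i m + 1 - 1 = SP.argmin S i m from by omega]
        exact hx (SP.argmin S i m) (by omega)
  · rintro ⟨⟨T, hT1, hT2⟩, hxT⟩ m hm
    have hic : T.ic = n - 2 := by have := SP.leaves_eq_s8 T; omega
    have hx' : ∀ p ∈ T.pairs 0, partialSum x (p.1 - 1) ≤ partialSum x (p.2 - 1) := by
      intro p hp
      have hb := SP.pairs_bounds_s8 T 0 p hp
      rw [← SP.cone_iff x p (by omega) (by omega)]
      exact hxT p hp
    have hres := SP.sound T 0 (partialSum x) hx' (m+1) (by omega) (by omega)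
    rw [hT2] at hres
    simpa using hres
end

section
/- The positive tropical variety Trop+ V(I) is a closed subset of R^n: the set of w ∈ R^n such that in_w(I) contains no nonzero polynomial with all positive coefficients is closed. -/
open MvPolynomial Classical in
/-- The weight of the monomial with exponent vector `a` in `f` with respect to
the weight vector `w`: the order (valuation) of its Puiseux-series coefficient
plus `∑ wᵢ aᵢ` (the `t`-order after substituting `xᵢ ↦ xᵢ t^{wᵢ}`). -/
noncomputable def mWeight {n : ℕ} (w : Fin n → ℝ)
    (f : MvPolynomial (Fin n) (HahnSeries ℚ ℂ)) (a : Fin n →₀ ℕ) : ℝ :=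
  ((f.coeff a).order : ℝ) + ∑ i, w i * (a i : ℝ)

open MvPolynomial Classical in
/-- The initial form `in_w(f) ∈ ℂ[x₁,…,xₙ]` of a polynomial `f` with Puiseux
series coefficients: the sum, over exponent vectors of minimal weight, of the
leading coefficients of the corresponding Puiseux series coefficients. -/
noncomputable def initForm {n : ℕ} (w : Fin n → ℝ)
    (f : MvPolynomial (Fin n) (HahnSeries ℚ ℂ)) : MvPolynomial (Fin n) ℂ :=
  if h : f = 0 then 0 else
    ∑ a ∈ f.support.filter (fun a =>
        mWeight w f a = f.support.inf' (support_nonempty.mpr h) (mWeight w f)),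
      monomial a ((f.coeff a).coeff (f.coeff a).order)

/-- The initial ideal `in_w(I)`, generated by the initial forms of the
elements of `I`. -/
noncomputable def initIdeal {n : ℕ} (w : Fin n → ℝ)
    (I : Ideal (MvPolynomial (Fin n) (HahnSeries ℚ ℂ))) :
    Ideal (MvPolynomial (Fin n) ℂ) :=
  Ideal.span {g | ∃ f ∈ I, g = initForm w f}

open MvPolynomial Classical in
/-- The initial form of a polynomial with complex (constant) coefficients with
respect to a weight vector `η`: the sum of the terms whose `η`-weight
(dot product of the exponent vector with `η`) is minimal. -/
noncomputable def initFormC {n : ℕ} (η : Fin n → ℝ)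
    (f : MvPolynomial (Fin n) ℂ) : MvPolynomial (Fin n) ℂ :=
  if h : f = 0 then 0 else
    ∑ a ∈ f.support.filter (fun a =>
        ∑ i, η i * (a i : ℝ) =
          f.support.inf' (support_nonempty.mpr h) (fun b => ∑ i, η i * (b i : ℝ))),
      monomial a (f.coeff a)

/-- The initial ideal of an ideal of `ℂ[x₁,…,xₙ]` with respect to `η`. -/
noncomputable def initIdealC {n : ℕ} (η : Fin n → ℝ)
    (I : Ideal (MvPolynomial (Fin n) ℂ)) : Ideal (MvPolynomial (Fin n) ℂ) :=
  Ideal.span {g | ∃ f ∈ I, g = initFormC η f}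

/-- A nonzero polynomial over `ℂ` all of whose coefficients are positive
reals. -/
def AllPosCoeffs {n : ℕ} (g : MvPolynomial (Fin n) ℂ) : Prop :=
  g ≠ 0 ∧ ∀ a ∈ g.support, (g.coeff a).im = 0 ∧ 0 < (g.coeff a).re

namespace TropClosedAux

open MvPolynomial Classical

variable {n : ℕ}

/-- dot product of a real weight vector with an exponent vector -/
noncomputable def wdot (w : Fin n → ℝ) (a : Fin n →₀ ℕ) : ℝ := ∑ i, w i * (a i : ℝ)

lemma mWeight_eq (w : Fin n → ℝ) (f : MvPolynomial (Fin n) (HahnSeries ℚ ℂ)) (a : Fin n →₀ ℕ) :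
    mWeight w f a = ((f.coeff a).order : ℝ) + wdot w a := rfl

lemma wdot_add (w : Fin n → ℝ) (a b : Fin n →₀ ℕ) : wdot w (a + b) = wdot w a + wdot w b := by
  simp [wdot, mul_add, Finset.sum_add_distrib]

/-- leading coefficient of a Hahn series -/
noncomputable def lc (s : HahnSeries ℚ ℂ) : ℂ := s.coeff s.order

noncomputable def minW (w : Fin n → ℝ) (f : MvPolynomial (Fin n) (HahnSeries ℚ ℂ)) (h : f ≠ 0) : ℝ :=
  f.support.inf' (support_nonempty.mpr h) (mWeight w f)

open Classical in
lemma coeff_initForm (w : Fin n → ℝ) (f : MvPolynomial (Fin n) (HahnSeries ℚ ℂ)) (h : f ≠ 0)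
    (e : Fin n →₀ ℕ) :
    (initForm w f).coeff e =
      if e ∈ f.support ∧ mWeight w f e = minW w f h then lc (f.coeff e) else 0 := by
  rw [initForm, dif_neg h, coeff_sum]
  simp only [coeff_monomial]
  simp only [minW]
  rw [Finset.sum_ite_eq' _ e fun a => (f.coeff a).coeff (f.coeff a).order]
  simp [Finset.mem_filter, lc]

lemma mem_support_initForm_iff (w : Fin n → ℝ) (f : MvPolynomial (Fin n) (HahnSeries ℚ ℂ))
    (h : f ≠ 0) (e : Fin n →₀ ℕ) :
    e ∈ (initForm w f).support ↔ e ∈ f.support ∧ mWeight w f e = minW w f h := by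
  rw [mem_support_iff, coeff_initForm w f h]
  constructor
  · intro he
    by_contra hc
    rw [if_neg hc] at he; exact he rfl
  · intro he
    rw [if_pos he]
    exact HahnSeries.coeff_order_eq_zero.not.mpr (by simpa [mem_support_iff] using he.1)

lemma coeff_initForm_of_mem (w : Fin n → ℝ) (f : MvPolynomial (Fin n) (HahnSeries ℚ ℂ))
    (h : f ≠ 0) (e : Fin n →₀ ℕ) (he : e ∈ f.support) (hm : mWeight w f e = minW w f h) :
    (initForm w f).coeff e = lc (f.coeff e) := by
  rw [coeff_initForm w f h, if_pos ⟨he, hm⟩]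

lemma minW_le (w : Fin n → ℝ) (f : MvPolynomial (Fin n) (HahnSeries ℚ ℂ)) (h : f ≠ 0)
    (e : Fin n →₀ ℕ) (he : e ∈ f.support) : minW w f h ≤ mWeight w f e :=
  Finset.inf'_le _ he

lemma exists_minW (w : Fin n → ℝ) (f : MvPolynomial (Fin n) (HahnSeries ℚ ℂ)) (h : f ≠ 0) :
    ∃ e ∈ f.support, mWeight w f e = minW w f h := by
  obtain ⟨e, he, hm⟩ := Finset.exists_mem_eq_inf' (support_nonempty.mpr h) (mWeight w f)
  exact ⟨e, he, hm.symm⟩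

lemma initForm_ne_zero (w : Fin n → ℝ) (f : MvPolynomial (Fin n) (HahnSeries ℚ ℂ)) (h : f ≠ 0) :
    initForm w f ≠ 0 := by
  obtain ⟨e, he, hm⟩ := exists_minW w f h
  intro h0
  have := mem_support_initForm_iff w f h e
  rw [h0] at this
  simp only [support_zero, Finset.notMem_empty, false_iff] at this
  exact this ⟨he, hm⟩

/- ### initFormC structure -/

noncomputable def minWC (η : Fin n → ℝ) (f : MvPolynomial (Fin n) ℂ) (h : f ≠ 0) : ℝ :=
  f.support.inf' (support_nonempty.mpr h) (fun b => wdot η b)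

open Classical in
lemma coeff_initFormC (η : Fin n → ℝ) (f : MvPolynomial (Fin n) ℂ) (h : f ≠ 0)
    (e : Fin n →₀ ℕ) :
    (initFormC η f).coeff e =
      if e ∈ f.support ∧ wdot η e = minWC η f h then f.coeff e else 0 := by
  rw [initFormC, dif_neg h, coeff_sum]
  simp only [coeff_monomial]
  simp only [minWC, wdot]
  rw [Finset.sum_ite_eq' _ e fun a => f.coeff a]
  simp [Finset.mem_filter]

lemma exists_minWC (η : Fin n → ℝ) (f : MvPolynomial (Fin n) ℂ) (h : f ≠ 0) :
    ∃ e ∈ f.support, wdot η e = minWC η f h := by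
  obtain ⟨e, he, hm⟩ := Finset.exists_mem_eq_inf' (support_nonempty.mpr h) (fun b => wdot η b)
  exact ⟨e, he, hm.symm⟩

lemma initFormC_ne_zero (η : Fin n → ℝ) (f : MvPolynomial (Fin n) ℂ) (h : f ≠ 0) :
    initFormC η f ≠ 0 := by
  obtain ⟨e, he, hm⟩ := exists_minWC η f h
  intro h0
  have : (initFormC η f).coeff e = f.coeff e := by
    rw [coeff_initFormC η f h, if_pos ⟨he, hm⟩]
  rw [h0] at this
  simp only [coeff_zero] at this
  exact (mem_support_iff.mp he) this.symm

lemma allPos_initFormC {η : Fin n → ℝ} {g : MvPolynomial (Fin n) ℂ} (hg : AllPosCoeffs g) :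
    AllPosCoeffs (initFormC η g) := by
  obtain ⟨hne, hpos⟩ := hg
  refine ⟨initFormC_ne_zero η g hne, fun a ha => ?_⟩
  rw [mem_support_iff, coeff_initFormC η g hne] at ha
  rw [coeff_initFormC η g hne]
  by_cases hc : a ∈ g.support ∧ wdot η a = minWC η g hne
  · rw [if_pos hc]; exact hpos a hc.1
  · rw [if_neg hc] at ha ⊢; exact absurd rfl ha

/- ### Step 2: local stability of the initial form -/

lemma wdot_add_weights (w η : Fin n → ℝ) (e : Fin n →₀ ℕ) :
    wdot (fun i => w i + η i) e = wdot w e + wdot η e := by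
  simp [wdot, add_mul, Finset.sum_add_distrib]

lemma mWeight_add_weights (w η : Fin n → ℝ) (f : MvPolynomial (Fin n) (HahnSeries ℚ ℂ))
    (e : Fin n →₀ ℕ) :
    mWeight (fun i => w i + η i) f e = mWeight w f e + wdot η e := by
  rw [mWeight_eq, mWeight_eq, wdot_add_weights]; ring

lemma abs_wdot_le {η : Fin n → ℝ} {δ : ℝ} (hη : ∀ i, |η i| < δ) (hδ : 0 ≤ δ) (e : Fin n →₀ ℕ) :
    |wdot η e| ≤ δ * ∑ i, (e i : ℝ) := by
  calc |wdot η e| ≤ ∑ i, |η i * (e i : ℝ)| := Finset.abs_sum_le_sum_abs _ _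
    _ ≤ ∑ i, δ * (e i : ℝ) := by
        refine Finset.sum_le_sum fun i _ => ?_
        rw [abs_mul, abs_of_nonneg (by positivity : (0:ℝ) ≤ (e i : ℝ))]
        exact mul_le_mul_of_nonneg_right (le_of_lt (hη i)) (by positivity)
    _ = δ * ∑ i, (e i : ℝ) := by rw [Finset.mul_sum]

lemma initForm_perturb (w : Fin n → ℝ) (f : MvPolynomial (Fin n) (HahnSeries ℚ ℂ)) (hf : f ≠ 0) :
    ∃ δ > 0, ∀ η : Fin n → ℝ, (∀ i, |η i| < δ) →
      initForm (fun i => w i + η i) f = initFormC η (initForm w f) := by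
  set m := minW w f hf with hm
  have hh'ne : initForm w f ≠ 0 := initForm_ne_zero w f hf
  set A := (initForm w f).support with hA
  have hmemA : ∀ e, e ∈ A ↔ e ∈ f.support ∧ mWeight w f e = m := mem_support_initForm_iff w f hf
  set deg : (Fin n →₀ ℕ) → ℝ := fun e => ∑ i, (e i : ℝ) with hdeg
  set B := (f.support.sup' (support_nonempty.mpr hf) deg) + 1 with hB
  have hB0 : 0 < B := by
    obtain ⟨e, he⟩ := support_nonempty.mpr hf
    have h1 : deg e ≤ f.support.sup' (support_nonempty.mpr hf) deg := Finset.le_sup' deg he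
    have h2 : 0 ≤ deg e := Finset.sum_nonneg fun i _ => by positivity
    simp only [hB]; linarith
  have hBe : ∀ e ∈ f.support, deg e ≤ B := fun e he => by
    have := Finset.le_sup' deg he
    simp only [hB]; linarith
  set T := f.support.filter (fun e => e ∉ A) with hT
  set γ : ℝ := if hTn : T.Nonempty then T.inf' hTn (fun e => mWeight w f e - m) else 1 with hγ
  have hγ0 : 0 < γ := by
    rw [hγ]
    split_ifs with hTn
    · obtain ⟨e, he, heq⟩ := Finset.exists_mem_eq_inf' hTn (fun e => mWeight w f e - m)
      rw [heq]
      rw [hT, Finset.mem_filter] at he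
      have h1 : m ≤ mWeight w f e := minW_le w f hf e he.1
      have h2 : mWeight w f e ≠ m := fun hc => he.2 ((hmemA e).mpr ⟨he.1, hc⟩)
      have := lt_of_le_of_ne h1 (Ne.symm h2)
      linarith
    · norm_num
  have hgap : ∀ e ∈ f.support, e ∉ A → m + γ ≤ mWeight w f e := by
    intro e he heA
    have heT : e ∈ T := by rw [hT, Finset.mem_filter]; exact ⟨he, heA⟩
    have hTn : T.Nonempty := ⟨e, heT⟩
    rw [hγ, dif_pos hTn]
    have := Finset.inf'_le (fun e => mWeight w f e - m) heT
    linarith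
  refine ⟨γ / (4 * B), by positivity, fun η hη => ?_⟩
  have hδ0 : (0:ℝ) ≤ γ / (4 * B) := by positivity
  have hbound : ∀ e ∈ f.support, |wdot η e| ≤ γ / 4 := by
    intro e he
    calc |wdot η e| ≤ γ / (4 * B) * deg e := abs_wdot_le hη hδ0 e
      _ ≤ γ / (4 * B) * B := mul_le_mul_of_nonneg_left (hBe e he) hδ0
      _ = γ / 4 := by field_simp
  obtain ⟨e₁, he₁A, he₁min⟩ := exists_minWC η (initForm w f) hh'ne
  set μ := minWC η (initForm w f) hh'ne with hμ
  have hμle : ∀ e ∈ A, μ ≤ wdot η e := fun e he => Finset.inf'_le _ he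
  have he₁S : e₁ ∈ f.support := ((hmemA e₁).mp he₁A).1
  have he₁m : mWeight w f e₁ = m := ((hmemA e₁).mp he₁A).2
  have hμ4 : μ ≤ γ / 4 := by
    rw [← he₁min]
    have := hbound e₁ he₁S
    exact le_trans (le_abs_self _) this
  set w' := fun i => w i + η i with hw'
  have hlow : ∀ e ∈ f.support, m + μ ≤ mWeight w' f e := by
    intro e he
    rw [hw', mWeight_add_weights]
    by_cases heA : e ∈ A
    · rw [((hmemA e).mp heA).2]
      exact add_le_add_right (hμle e heA) m
    · have h1 := hgap e he heA
      have h2 := hbound e he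
      have := abs_le.mp h2
      linarith
  have he₁w' : mWeight w' f e₁ = m + μ := by
    rw [hw', mWeight_add_weights, he₁m, he₁min]
  have hminw' : minW w' f hf = m + μ := by
    apply le_antisymm
    · rw [← he₁w']; exact minW_le w' f hf e₁ he₁S
    · exact Finset.le_inf' _ _ hlow
  have hcond : ∀ e, (e ∈ f.support ∧ mWeight w' f e = minW w' f hf) ↔
      (e ∈ A ∧ wdot η e = μ) := by
    intro e
    rw [hminw']
    constructor
    · rintro ⟨he, hew'⟩
      have heA : e ∈ A := by
        by_contra heA
        have h1 := hgap e he heA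
        have h2 := abs_le.mp (hbound e he)
        rw [hw', mWeight_add_weights] at hew'
        linarith
      refine ⟨heA, ?_⟩
      rw [hw', mWeight_add_weights, ((hmemA e).mp heA).2] at hew'
      linarith
    · rintro ⟨heA, heμ⟩
      refine ⟨((hmemA e).mp heA).1, ?_⟩
      rw [hw', mWeight_add_weights, ((hmemA e).mp heA).2, heμ]
  ext e
  rw [coeff_initForm w' f hf e, coeff_initFormC η (initForm w f) hh'ne e]
  by_cases hc : e ∈ A ∧ wdot η e = μ
  · rw [if_pos ((hcond e).mpr hc), if_pos (by exact ⟨hc.1, hc.2⟩)]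
    exact (coeff_initForm_of_mem w f hf e ((hmemA e).mp hc.1).1 ((hmemA e).mp hc.1).2).symm
  · rw [if_neg (fun hcc => hc ((hcond e).mp hcc)), if_neg (by exact hc)]

/- ### Step 1: a positive element of the initial ideal is an initial form -/

lemma hahn_coeff_sum {α : Type*} (s : Finset α) (F : α → HahnSeries ℚ ℂ) (r : ℚ) :
    (∑ x ∈ s, F x).coeff r = ∑ x ∈ s, (F x).coeff r :=
  map_sum (HahnSeries.coeff.addMonoidHom r) F s

lemma coeff_mul_expand (P pp : MvPolynomial (Fin n) ℂ) (e : Fin n →₀ ℕ) :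
    (P * pp).coeff e = ∑ a ∈ P.support, if a ≤ e then P.coeff a * pp.coeff (e - a) else 0 := by
  conv_lhs => rw [P.as_sum, Finset.sum_mul]
  rw [coeff_sum]
  exact Finset.sum_congr rfl fun a _ => coeff_monomial_mul' ..

lemma exists_initForm_pos (w : Fin n → ℝ) (I : Ideal (MvPolynomial (Fin n) (HahnSeries ℚ ℂ)))
    {g : MvPolynomial (Fin n) ℂ} (hg : g ∈ initIdeal w I) (hpos : AllPosCoeffs g) :
    ∃ f ∈ I, f ≠ 0 ∧ AllPosCoeffs (initForm w f) := by
  classical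
  obtain ⟨c, hcsupp, hcsum⟩ := Submodule.mem_span_set.mp hg
  set J : Finset (MvPolynomial (Fin n) ℂ) := c.support.filter (fun p => p ≠ 0) with hJ
  have hex : ∀ p ∈ J, ∃ fp ∈ I, p = initForm w fp := by
    intro p hp
    rw [hJ, Finset.mem_filter] at hp
    exact hcsupp (Finset.mem_coe.mpr hp.1)
  set F : MvPolynomial (Fin n) ℂ → MvPolynomial (Fin n) (HahnSeries ℚ ℂ) :=
    fun p => if hp : ∃ fp ∈ I, p = initForm w fp then hp.choose else 0 with hFdef
  have hFI : ∀ p ∈ J, F p ∈ I ∧ p = initForm w (F p) := by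
    intro p hp
    have h1 := hex p hp
    rw [hFdef]
    simp only [dif_pos h1]
    exact ⟨h1.choose_spec.1, h1.choose_spec.2⟩
  have hFne : ∀ p ∈ J, F p ≠ 0 := by
    intro p hp h0
    have h2 := (hFI p hp).2
    rw [h0] at h2
    have h3 : p = 0 := by rw [h2, initForm]; simp
    rw [hJ, Finset.mem_filter] at hp
    exact hp.2 h3
  have hcsum' : ∑ p ∈ c.support, c p * p = g := by
    rw [← hcsum, Finsupp.sum]
    exact Finset.sum_congr rfl fun p _ => smul_eq_mul ..
  have hgsum : ∑ p ∈ J, c p * p = g := by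
    rw [← hcsum', hJ]
    exact Finset.sum_filter_of_ne fun p hp hne h0 => hne (by rw [h0, mul_zero])
  obtain ⟨e₀, he₀⟩ := support_nonempty.mpr hpos.1
  set C : ℝ := wdot w e₀ with hC
  set Q : ℝ → Prop := fun r => ∃ q : ℚ, r = C + (q : ℝ) with hQ
  have hQshift : ∀ (r : ℝ) (q : ℚ), Q (r + q) ↔ Q r := by
    intro r q
    constructor
    · rintro ⟨q', hq'⟩
      refine ⟨q' - q, ?_⟩
      push_cast
      push_cast at hq'
      linarith
    · rintro ⟨q', hq'⟩
      refine ⟨q' + q, ?_⟩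
      push_cast
      push_cast at hq'
      linarith
  set mh : MvPolynomial (Fin n) ℂ → ℝ := fun p => if hp : F p = 0 then 0 else minW w (F p) hp
    with hmh
  have hmh_eq : ∀ (p) (hp : F p ≠ 0), mh p = minW w (F p) hp := fun p hp => by
    rw [hmh]; simp only [dif_neg hp]
  have hsuppP : ∀ p ∈ J, ∀ b, b ∈ p.support ↔
      (b ∈ (F p).support ∧ mWeight w (F p) b = mh p) := by
    intro p hp b
    rw [hmh_eq p (hFne p hp)]
    conv_lhs => rw [(hFI p hp).2]
    exact mem_support_initForm_iff w (F p) (hFne p hp) b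
  have hcoeffP : ∀ p ∈ J, ∀ b ∈ p.support, p.coeff b = lc ((F p).coeff b) := by
    intro p hp b hb
    have h2 := (hsuppP p hp b).mp hb
    conv_lhs => rw [(hFI p hp).2]
    exact coeff_initForm_of_mem w (F p) (hFne p hp) b h2.1
      (by rw [← hmh_eq p (hFne p hp)]; exact h2.2)
  set qsel : MvPolynomial (Fin n) ℂ → (Fin n →₀ ℕ) → ℚ :=
    fun p a => if hq : Q (mh p + wdot w a) then hq.choose else 0 with hqsel
  have hqsel_spec : ∀ p a, Q (mh p + wdot w a) → mh p + wdot w a = C + (qsel p a : ℝ) := by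
    intro p a hq
    rw [hqsel]
    simp only [dif_pos hq]
    exact hq.choose_spec
  set A : MvPolynomial (Fin n) ℂ → Finset (Fin n →₀ ℕ) :=
    fun p => (c p).support.filter (fun a => Q (mh p + wdot w a)) with hA
  set f : MvPolynomial (Fin n) (HahnSeries ℚ ℂ) :=
    ∑ p ∈ J, ∑ a ∈ A p, (monomial a (HahnSeries.single (-(qsel p a)) ((c p).coeff a))) * F p
    with hf
  have hfI : f ∈ I :=
    Ideal.sum_mem I fun p hp => Ideal.sum_mem I fun a _ => I.mul_mem_left _ (hFI p hp).1
  have hwdot_split : ∀ (a e : Fin n →₀ ℕ), a ≤ e → wdot w e = wdot w a + wdot w (e - a) := by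
    intro a e hae
    conv_lhs => rw [← add_tsub_cancel_of_le hae]
    exact wdot_add w a (e - a)
  have hclass : ∀ p ∈ J, ∀ (a e : Fin n →₀ ℕ), a ≤ e → (e - a) ∈ p.support →
      (Q (wdot w e) ↔ Q (mh p + wdot w a)) := by
    intro p hp a e hae hbe
    have h2 := (hsuppP p hp _).mp hbe
    have horder : (((F p).coeff (e - a)).order : ℝ) + wdot w (e - a) = mh p := by
      rw [← mWeight_eq]; exact h2.2
    have hsum := hwdot_split a e hae
    have heq : mh p + wdot w a = wdot w e + ((((F p).coeff (e - a)).order : ℚ) : ℝ) := by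
      push_cast
      linarith
    rw [heq, hQshift]
  have hI2 : ∀ e, (∑ p ∈ J, ∑ a ∈ A p, if a ≤ e then (c p).coeff a * p.coeff (e - a) else 0)
      = if Q (wdot w e) then g.coeff e else 0 := by
    intro e
    by_cases hQe : Q (wdot w e)
    · rw [if_pos hQe]
      have hstep : ∀ p ∈ J, (∑ a ∈ A p, if a ≤ e then (c p).coeff a * p.coeff (e - a) else 0)
          = (c p * p).coeff e := by
        intro p hp
        rw [coeff_mul_expand (c p) p e, hA]
        apply Finset.sum_filter_of_ne
        intro a _ hne
        by_cases hae : a ≤ e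
        · rw [if_pos hae] at hne
          have hb : (e - a) ∈ p.support := by
            rw [mem_support_iff]
            intro h0
            rw [h0, mul_zero] at hne
            exact hne rfl
          exact (hclass p hp a e hae hb).mp hQe
        · rw [if_neg hae] at hne
          exact absurd rfl hne
      rw [Finset.sum_congr rfl hstep, ← coeff_sum, hgsum]
    · rw [if_neg hQe]
      apply Finset.sum_eq_zero
      intro p hp
      apply Finset.sum_eq_zero
      intro a ha
      rw [hA, Finset.mem_filter] at ha
      by_cases hae : a ≤ e
      · rw [if_pos hae]
        by_cases hb : (e - a) ∈ p.support
        · exact absurd ((hclass p hp a e hae hb).mpr ha.2) hQe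
        · rw [notMem_support_iff.mp hb, mul_zero]
      · rw [if_neg hae]
  have hfcoeff : ∀ (e : Fin n →₀ ℕ) (r : ℚ), (f.coeff e).coeff r =
      ∑ p ∈ J, ∑ a ∈ A p,
        (if a ≤ e then ((c p).coeff a) * (((F p).coeff (e - a)).coeff (r + qsel p a)) else 0) := by
    intro e r
    rw [hf, coeff_sum, hahn_coeff_sum]
    refine Finset.sum_congr rfl fun p _ => ?_
    rw [coeff_sum, hahn_coeff_sum]
    refine Finset.sum_congr rfl fun a _ => ?_
    rw [coeff_monomial_mul']
    by_cases hae : a ≤ e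
    · rw [if_pos hae, if_pos hae]
      have h1 := HahnSeries.coeff_single_mul_add (r := (c p).coeff a)
        (x := (F p).coeff (e - a)) (a := r + qsel p a) (b := -(qsel p a))
      rwa [add_neg_cancel_right] at h1
    · rw [if_neg hae, if_neg hae]
      exact HahnSeries.coeff_zero
  have hkey : ∀ (e : Fin n →₀ ℕ) (r : ℚ), ∀ p ∈ J, ∀ a ∈ A p, a ≤ e →
      ((r : ℝ) + (qsel p a : ℝ)) + wdot w (e - a) = (((r : ℝ) + wdot w e) - C) + mh p := by
    intro e r p hp a ha hae
    rw [hA, Finset.mem_filter] at ha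
    have hspec := hqsel_spec p a ha.2
    have hsum := hwdot_split a e hae
    linarith
  have hV : ∀ (e : Fin n →₀ ℕ) (r : ℚ), (r : ℝ) + wdot w e < C → (f.coeff e).coeff r = 0 := by
    intro e r hr
    rw [hfcoeff]
    apply Finset.sum_eq_zero
    intro p hp
    apply Finset.sum_eq_zero
    intro a ha
    by_cases hae : a ≤ e
    · rw [if_pos hae]
      rcases eq_or_ne ((F p).coeff (e - a)) 0 with h0 | hs0
      · rw [h0, HahnSeries.coeff_zero, mul_zero]
      · have hb : (e - a) ∈ (F p).support := mem_support_iff.mpr hs0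
        have hords : mh p ≤ (((F p).coeff (e - a)).order : ℝ) + wdot w (e - a) := by
          rw [hmh_eq p (hFne p hp), ← mWeight_eq]
          exact minW_le w (F p) (hFne p hp) _ hb
        have hk := hkey e r p hp a ha hae
        have hlt : ((r + qsel p a : ℚ) : ℝ) < ((((F p).coeff (e - a)).order : ℚ) : ℝ) := by
          push_cast
          push_cast at hk hords
          linarith
        have hlt' : r + qsel p a < ((F p).coeff (e - a)).order := by exact_mod_cast hlt
        rw [HahnSeries.coeff_eq_zero_of_lt_order hlt', mul_zero]
    · rw [if_neg hae]
  have hL : ∀ (e : Fin n →₀ ℕ) (r : ℚ), (r : ℝ) + wdot w e = C → (f.coeff e).coeff r = g.coeff e := by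
    intro e r hr
    have hQe : Q (wdot w e) := ⟨-r, by push_cast; linarith⟩
    have h2 := hI2 e
    rw [if_pos hQe] at h2
    rw [hfcoeff, ← h2]
    refine Finset.sum_congr rfl fun p hp => Finset.sum_congr rfl fun a ha => ?_
    by_cases hae : a ≤ e
    · rw [if_pos hae, if_pos hae]
      congr 1
      have hk := hkey e r p hp a ha hae
      by_cases hb : (e - a) ∈ (F p).support
      · by_cases hbp : (e - a) ∈ p.support
        · have h3 := (hsuppP p hp _).mp hbp
          have hords : ((((F p).coeff (e - a)).order : ℚ) : ℝ) + wdot w (e - a) = mh p := by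
            rw [← mWeight_eq]
            exact h3.2
          have heqr : ((r + qsel p a : ℚ) : ℝ) = ((((F p).coeff (e - a)).order : ℚ) : ℝ) := by
            push_cast
            push_cast at hk hords
            linarith
          have heq : r + qsel p a = ((F p).coeff (e - a)).order := by exact_mod_cast heqr
          rw [heq, hcoeffP p hp _ hbp]
          rfl
        · have hords : mh p ≤ (((F p).coeff (e - a)).order : ℝ) + wdot w (e - a) := by
            rw [hmh_eq p (hFne p hp), ← mWeight_eq]
            exact minW_le w (F p) (hFne p hp) _ hb
          have hne2 : ¬((((F p).coeff (e - a)).order : ℝ) + wdot w (e - a) = mh p) := by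
            intro hq2
            exact hbp ((hsuppP p hp _).mpr ⟨hb, by rw [mWeight_eq]; exact hq2⟩)
          have hlt : ((r + qsel p a : ℚ) : ℝ) < ((((F p).coeff (e - a)).order : ℚ) : ℝ) := by
            have hstrict := lt_of_le_of_ne hords (Ne.symm hne2)
            push_cast
            push_cast at hk hstrict
            linarith
          have hlt' : r + qsel p a < ((F p).coeff (e - a)).order := by exact_mod_cast hlt
          rw [HahnSeries.coeff_eq_zero_of_lt_order hlt', notMem_support_iff.mp hbp]
      · have hs0 : (F p).coeff (e - a) = 0 := notMem_support_iff.mp hb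
        have hbp : (e - a) ∉ p.support := fun hbp => hb ((hsuppP p hp _).mp hbp).1
        rw [hs0, notMem_support_iff.mp hbp, HahnSeries.coeff_zero]
    · rw [if_neg hae, if_neg hae]
  set g' : MvPolynomial (Fin n) ℂ :=
    ∑ e ∈ g.support.filter (fun e => Q (wdot w e)), monomial e (g.coeff e) with hg'
  have hg'coeff : ∀ e, g'.coeff e = if Q (wdot w e) then g.coeff e else 0 := by
    intro e
    rw [hg', coeff_sum]
    simp only [coeff_monomial]
    rw [Finset.sum_ite_eq' _ e fun a => g.coeff a]
    by_cases h1 : e ∈ g.support.filter (fun e => Q (wdot w e))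
    · rw [if_pos h1, if_pos (Finset.mem_filter.mp h1).2]
    · rw [if_neg h1]
      by_cases hQe : Q (wdot w e)
      · rw [if_pos hQe]
        have h2 : e ∉ g.support := fun he => h1 (Finset.mem_filter.mpr ⟨he, hQe⟩)
        exact (notMem_support_iff.mp h2).symm
      · rw [if_neg hQe]
  have hmain : ∀ e, Q (wdot w e) → g.coeff e ≠ 0 →
      f.coeff e ≠ 0 ∧ mWeight w f e = C ∧ lc (f.coeff e) = g.coeff e := by
    intro e hQe hge
    obtain ⟨q, hq⟩ := hQe
    have hr : ((-q : ℚ) : ℝ) + wdot w e = C := by push_cast; linarith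
    have hcoe : (f.coeff e).coeff (-q) = g.coeff e := hL e (-q) hr
    have hfe : f.coeff e ≠ 0 := fun h0 => hge (by rw [← hcoe, h0, HahnSeries.coeff_zero])
    have hordle : (f.coeff e).order ≤ -q :=
      HahnSeries.order_le_of_coeff_ne_zero (by rw [hcoe]; exact hge)
    have hordge : ¬((f.coeff e).order < -q) := by
      intro hlt
      have h1 : (((f.coeff e).order : ℚ) : ℝ) + wdot w e < C := by
        have h2 : (((f.coeff e).order : ℚ) : ℝ) < ((-q : ℚ) : ℝ) := by exact_mod_cast hlt
        linarith
      exact HahnSeries.coeff_order_eq_zero.not.mpr hfe (hV e _ h1)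
    have hord : (f.coeff e).order = -q := le_antisymm hordle (not_lt.mp hordge)
    refine ⟨hfe, ?_, ?_⟩
    · rw [mWeight_eq, hord]
      exact hr
    · rw [lc, hord, hcoe]
  have hQe₀ : Q (wdot w e₀) := ⟨0, by simp [hC]⟩
  have hge₀ : g.coeff e₀ ≠ 0 := mem_support_iff.mp he₀
  obtain ⟨hfe₀, hme₀, _⟩ := hmain e₀ hQe₀ hge₀
  have hfne : f ≠ 0 := fun h0 => hfe₀ (by rw [h0, coeff_zero])
  have hCmin : minW w f hfne = C := by
    apply le_antisymm
    · rw [← hme₀]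
      exact minW_le w f hfne e₀ (mem_support_iff.mpr hfe₀)
    · apply Finset.le_inf'
      intro e he
      rw [mem_support_iff] at he
      rw [mWeight_eq]
      by_contra hlt
      push_neg at hlt
      exact HahnSeries.coeff_order_eq_zero.not.mpr he (hV e _ hlt)
  have hform : initForm w f = g' := by
    ext e
    rw [coeff_initForm w f hfne e, hg'coeff e]
    by_cases hc : e ∈ f.support ∧ mWeight w f e = minW w f hfne
    · rw [if_pos hc]
      have hre : (((f.coeff e).order : ℚ) : ℝ) + wdot w e = C := by
        have h2 := hc.2
        rw [hCmin, mWeight_eq] at h2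
        exact_mod_cast h2
      have hQe : Q (wdot w e) := ⟨-(f.coeff e).order, by push_cast; push_cast at hre; linarith⟩
      rw [if_pos hQe]
      simpa [lc] using hL e ((f.coeff e).order) hre
    · rw [if_neg hc]
      by_cases hQe : Q (wdot w e)
      · rw [if_pos hQe]
        by_cases hge : g.coeff e = 0
        · exact hge.symm
        · exfalso
          obtain ⟨h1, h2, _⟩ := hmain e hQe hge
          exact hc ⟨mem_support_iff.mpr h1, by rw [h2, hCmin]⟩
      · rw [if_neg hQe]
  refine ⟨f, hfI, hfne, ?_⟩
  rw [hform]
  constructor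
  · intro h0
    have h1 := hg'coeff e₀
    rw [h0, if_pos hQe₀, coeff_zero] at h1
    exact hge₀ h1.symm
  · intro a ha
    rw [mem_support_iff, hg'coeff a] at ha
    rw [hg'coeff a]
    by_cases hQa : Q (wdot w a)
    · rw [if_pos hQa] at ha ⊢
      exact hpos.2 a (mem_support_iff.mpr ha)
    · rw [if_neg hQa] at ha
      exact absurd rfl ha

end TropClosedAux

open TropClosedAux in
/-- The positive tropical variety `Trop⁺ V(I)` is a closed subset of `ℝⁿ`. -/
theorem tropPlus_isClosed {n : ℕ}
    (I : Ideal (MvPolynomial (Fin n) (HahnSeries ℚ ℂ))) :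
    IsClosed {w : Fin n → ℝ | ¬∃ g ∈ initIdeal w I, AllPosCoeffs g} := by
  rw [← isOpen_compl_iff]
  rw [Metric.isOpen_iff]
  intro w hw
  simp only [Set.mem_compl_iff, Set.mem_setOf_eq, not_not] at hw
  obtain ⟨g, hgI, hgpos⟩ := hw
  obtain ⟨f, hfI, hfne, hfpos⟩ := exists_initForm_pos w I hgI hgpos
  obtain ⟨δ, hδ, hstab⟩ := initForm_perturb w f hfne
  refine ⟨δ, hδ, fun w' hw' => ?_⟩
  simp only [Set.mem_compl_iff, Set.mem_setOf_eq, not_not]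
  have hwi : ∀ i, |w' i - w i| < δ := by
    intro i
    have := dist_le_pi_dist w' w i
    rw [Metric.mem_ball] at hw'
    calc |w' i - w i| = dist (w' i) (w i) := by rw [Real.dist_eq]
    _ ≤ dist w' w := dist_le_pi_dist w' w i
    _ < δ := hw'
  have hw'eq : w' = fun i => w i + (w' i - w i) := by funext i; ring
  refine ⟨initForm w' f, ?_, ?_⟩
  · exact Ideal.subset_span ⟨f, hfI, rfl⟩
  · rw [hw'eq, hstab (fun i => w' i - w i) hwi]
    exact allPos_initFormC hfpos
end

section
/- The map Ψ is a left inverse of Φ₁: for any assignment x of positive reals to the regions of Web_{k,n}, applying Ψ to the matrix A_{k,n}(x) recovers x; i.e., for every region (i,j), (P_{K(i,j)}(x)·P_{K(i+1,j−2)}(x)·P_{K(i+2,j−1)}(x)) / (P_{K(i,j−1)}(x)·P_{K(i+1,j)}(x)·P_{K(i+2,j−2)}(x)) = x_{(i,j)}. -/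
/-- A directed path in the web diagram `Web_{k,nk+k}` (a `k × nk` grid with
sources entering on the right of each row and sinks leaving at the bottom of
each column; rows are indexed `0,…,k-1` from top to bottom and columns
`0,…,nk-1` from left to right).  The path enters row `src` from the right,
moves left and down, descending from row `r` to row `r+1` at column `d r`, and
exits at the bottom of column `d (k-1)`.  The descent function is normalized to
be constant outside the interval `[src, k-1]`. -/
structure WebPath (k nk : ℕ) : Type where
  src : ℕ
  d : ℕ → ℕ
  src_lt : src < k
  d_lt : ∀ r, d r < nk
  anti : ∀ ⦃r s : ℕ⦄, r ≤ s → d s ≤ d r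
  low : ∀ r ≤ src, d r = d src
  high : ∀ r, k - 1 ≤ r → d r = d (k - 1)

namespace WebPath

/-- The column of the sink at which the path exits. -/
def sink {k nk : ℕ} (p : WebPath k nk) : ℕ := p.d (k - 1)

/-- The set of grid vertices `(row, column)` visited by the path. -/
def vertexSet {k nk : ℕ} (p : WebPath k nk) : Set (ℕ × ℕ) :=
  {v | p.src ≤ v.1 ∧ v.1 < k ∧ p.d v.1 ≤ v.2 ∧
    v.2 ≤ (if v.1 = p.src then nk - 1 else p.d (v.1 - 1))}

/-- The product of the edge variables along the path, where `xh r c` is the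
variable of the horizontal edge entering vertex `(r, c)` from the right and
`xv r c` is the variable of the vertical edge leaving vertex `(r, c)`
downwards. -/
def edgeProd {k nk : ℕ} {R : Type*} [CommSemiring R] (p : WebPath k nk)
    (xh xv : ℕ → ℕ → R) : R :=
  (∏ c ∈ Finset.Icc (p.d p.src) (nk - 1), xh p.src c) *
    (∏ r ∈ Finset.Ioc p.src (k - 1),
      ∏ c ∈ Finset.Ico (p.d r) (p.d (r - 1)), xh r c) *
    (∏ r ∈ Finset.Icc p.src (k - 1), xv r (p.d r))

/-- The product of the region variables of all regions lying below the path,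
where `x r c` is the variable of the region between vertex rows `r` and `r+1`
lying to the right of vertex column `c`. -/
def regionProd {k nk : ℕ} {R : Type*} [CommSemiring R] (p : WebPath k nk)
    (x : ℕ → ℕ → R) : R :=
  ∏ r ∈ Finset.Icc p.src (k - 1), ∏ c ∈ Finset.Icc (p.d r) (nk - 1), x r c

end WebPath

/-- A family of pairwise vertex-disjoint paths in `Web_{k,n}` from the source
set `[k] \ (K ∩ [k])` to the sink set `K \ (K ∩ [k])`, for a `k`-element subset
`K` of the (`0`-indexed) boundary labels `{0,…,n-1}`; the sink exiting at the
bottom of column `c` has label `n - 1 - c`. -/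
structure DisjointFamily (k n : ℕ) (K : Finset ℕ) : Type where
  F : (i : Fin k) → (i : ℕ) ∉ K → WebPath k (n - k)
  src_eq : ∀ i h, (F i h).src = (i : ℕ)
  sink_mem : ∀ i h, n - 1 - (F i h).sink ∈ K
  sink_inj : ∀ i h i' h', (F i h).sink = (F i' h').sink → i = i'
  disj : ∀ i h i' h', i ≠ i' →
    Disjoint (F i h).vertexSet (F i' h').vertexSet

/-- The product of the edge weights over all the paths of a disjoint path
family. -/
def DisjointFamily.edgeWeight {k n : ℕ} {K : Finset ℕ} {R : Type*}
    [CommSemiring R] (Fam : DisjointFamily k n K) (xh xv : ℕ → ℕ → R) : R :=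
  ∏ i : Fin k, if h : (i : ℕ) ∉ K then (Fam.F i h).edgeProd xh xv else 1

/-- The matrix `A_{k,n}(x)`: its first `k` columns form the identity matrix,
and for a column `j ≥ k` the entry in row `i` is `(-1)^i` times the sum of the
products of the edge weights over all directed paths from source `i` to the
sink labeled `j` (which exits at the bottom of column `n - 1 - j`). -/
noncomputable def webMatrix (k n : ℕ) {R : Type*} [CommRing R]
    (xh xv : ℕ → ℕ → R) : Matrix (Fin k) (Fin n) R :=
  fun i j =>
    if (j : ℕ) < k then (if (i : ℕ) = (j : ℕ) then 1 else 0)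
    else (-1) ^ (i : ℕ) *
      ∑ᶠ p : {p : WebPath k (n - k) //
          p.src = (i : ℕ) ∧ p.sink = n - 1 - (j : ℕ)},
        (p : WebPath k (n - k)).edgeProd xh xv

/-- The product of the region weights over all the paths of a disjoint path
family, where `x r c` is the variable of the region in row `r` to the right of
column `c`. -/
def DisjointFamily.regionWeight {k n : ℕ} {K : Finset ℕ}
    (Fam : DisjointFamily k n K) (x : ℕ → ℕ → ℝ) : ℝ :=
  ∏ i : Fin k, if h : (i : ℕ) ∉ K then (Fam.F i h).regionProd x else 1

/-- The Plücker coordinate `P_K(x)` of the point `Φ₁(x)` of the totally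
positive Grassmannian, as a function of the region variables: the sum over all
pairwise vertex-disjoint path families for `K` of the products of the region
variables below the paths.  By convention `P_∅ = 1`. -/
noncomputable def webP (k n : ℕ) (x : ℕ → ℕ → ℝ) (K : Finset ℕ) : ℝ :=
  if K = ∅ then 1
  else ∑ᶠ Fam : DisjointFamily k n K, Fam.regionWeight x

/-- The index set `K(i,j)` attached to the region of `Web_{k,n}` in (`0`-indexed)
cell coordinates `(r, c)` (row `r`, to the right of column `c`); this is the
`0`-indexed version of `K(i,j) = {1,…,i-1} ∪ {i+j-k,…,j}`, and it is `∅` when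
`(r,c)` is not a region. -/
def regionK (k n r c : ℕ) : Finset ℕ :=
  if r < k ∧ c < n - k then
    Finset.range r ∪ Finset.Icc (r + (n - k) - c) (n - 1 - c)
  else ∅

/-- Characterization of the sources for `regionK`. -/
theorem not_mem_regionK {k n r c : ℕ} (hkn : k < n) (hr : r < k) (hc : c < n - k)
    {i : ℕ} (hik : i < k) :
    i ∉ regionK k n r c ↔ r ≤ i ∧ i < r + (n - k) - c := by
  rw [regionK, if_pos ⟨hr, hc⟩]
  simp only [Finset.mem_union, Finset.mem_range, Finset.mem_Icc]
  omega

/-- Characterization of the sinks for `regionK`. -/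
theorem mem_sink_regionK {k n r c : ℕ} (hk : 0 < k) (hkn : k < n) (hr : r < k)
    (hc : c < n - k) {s : ℕ} (hs : s < n - k) :
    n - 1 - s ∈ regionK k n r c ↔ c ≤ s ∧ s ≤ c + (k - 1 - r) := by
  rw [regionK, if_pos ⟨hr, hc⟩]
  simp only [Finset.mem_union, Finset.mem_range, Finset.mem_Icc]
  omega

/-- The path entering at row `i`, going left to column `a` and straight down. -/
def constPath (k nk i a : ℕ) (hi : i < k) (ha : a < nk) : WebPath k nk where
  src := i
  d := fun _ => a
  src_lt := hi
  d_lt := fun _ => ha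
  anti := fun _ _ _ => le_rfl
  low := fun _ _ => rfl
  high := fun _ _ => rfl

theorem webPath_ext {k nk : ℕ} {p q : WebPath k nk} (h1 : p.src = q.src)
    (h2 : p.d = q.d) : p = q := by
  cases p; cases q; cases h1; cases h2; rfl

theorem family_ext {k n : ℕ} {K : Finset ℕ} {A B : DisjointFamily k n K}
    (h : ∀ i hi, A.F i hi = B.F i hi) : A = B := by
  cases A; cases B
  have hF : _ = _ := funext fun i => funext fun hi => h i hi
  cases hF; rfl

theorem constPath_disj {k nk i a i' a' : ℕ} (hi : i < k) (ha : a < nk)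
    (hi' : i' < k) (ha' : a' < nk) (hii : i < i') (haa : a < a') :
    Disjoint (constPath k nk i a hi ha).vertexSet
      (constPath k nk i' a' hi' ha').vertexSet := by
  rw [Set.disjoint_left]
  rintro ⟨ρ, col⟩ h1 h2
  simp only [WebPath.vertexSet, constPath, Set.mem_setOf_eq] at h1 h2
  obtain ⟨h11, h12, h13, h14⟩ := h1
  obtain ⟨h21, h22, h23, h24⟩ := h2
  have hρ : ¬ ρ = i := by omega
  simp only [hρ, if_false] at h14
  omega

/-- Crossing lemma: two disjoint paths keep their horizontal order. -/
theorem d_lt_of_disjoint {k nk : ℕ} {p q : WebPath k nk}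
    (hd : Disjoint p.vertexSet q.vertexSet) (hss : p.src < q.src) :
    ∀ ρ, q.src ≤ ρ → ρ ≤ k - 1 → p.d ρ < q.d ρ := by
  have hmem := Set.disjoint_left.mp hd
  have hqk := q.src_lt
  intro ρ hρ
  induction ρ, hρ using Nat.le_induction with
  | base =>
    intro hk1
    by_contra hle
    push_neg at hle
    have h1 : ((q.src, p.d q.src) : ℕ × ℕ) ∈ p.vertexSet := by
      simp only [WebPath.vertexSet, Set.mem_setOf_eq]
      refine ⟨le_of_lt hss, q.src_lt, le_rfl, ?_⟩
      rw [if_neg (by omega)]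
      exact p.anti (Nat.sub_le _ _)
    have h2 : ((q.src, p.d q.src) : ℕ × ℕ) ∈ q.vertexSet := by
      simp only [WebPath.vertexSet, Set.mem_setOf_eq]
      refine ⟨le_rfl, q.src_lt, hle, ?_⟩
      have := p.d_lt q.src
      simp only [if_true]
      omega
    exact hmem h1 h2
  | succ ρ hρ ih =>
    intro hk1
    have hlt := ih (by omega)
    by_contra hle
    push_neg at hle
    have h1 : ((ρ + 1, p.d (ρ + 1)) : ℕ × ℕ) ∈ p.vertexSet := by
      simp only [WebPath.vertexSet, Set.mem_setOf_eq]
      refine ⟨by omega, by omega, le_rfl, ?_⟩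
      rw [if_neg (by omega)]
      exact p.anti (by omega)
    have h2 : ((ρ + 1, p.d (ρ + 1)) : ℕ × ℕ) ∈ q.vertexSet := by
      simp only [WebPath.vertexSet, Set.mem_setOf_eq]
      refine ⟨by omega, by omega, hle, ?_⟩
      rw [if_neg (by omega)]
      have h3 : p.d (ρ + 1) ≤ p.d ρ := p.anti (Nat.le_succ ρ)
      have : (ρ + 1 - 1 : ℕ) = ρ := by omega
      rw [this]
      omega
    exact hmem h1 h2

theorem sink_lt_of_disjoint {k nk : ℕ} {p q : WebPath k nk}
    (hd : Disjoint p.vertexSet q.vertexSet) (hss : p.src < q.src) :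
    p.sink < q.sink := by
  have hqk := q.src_lt
  exact d_lt_of_disjoint hd hss (k - 1) (by omega) le_rfl

/-- A path whose descent function attains its sink value already at the source
row is constant. -/
theorem d_const {k nk : ℕ} (p : WebPath k nk) {a : ℕ} (hk1 : p.d (k - 1) = a)
    (htop : p.d p.src ≤ a) : ∀ ρ, p.d ρ = a := by
  have hsk : p.src ≤ k - 1 := by have := p.src_lt; omega
  have hda : p.d p.src = a := by
    have := p.anti hsk
    omega
  intro ρ
  rcases le_or_gt ρ p.src with h1 | h1
  · rw [p.low ρ h1, hda]
  · rcases le_or_gt ρ (k - 1) with h2 | h2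
    · have ha1 := p.anti h1.le
      have ha2 := p.anti h2
      omega
    · rw [p.high ρ h2.le, hk1]

/-- The canonical disjoint path family for `K(r,c)`. -/
def canonF (k n r c : ℕ) (hk : 0 < k) (hkn : k < n) (hr : r < k) (hc : c < n - k) :
    DisjointFamily k n (regionK k n r c) where
  F i h := constPath k (n - k) i (c + (↑i - r)) i.isLt
    (by have := (not_mem_regionK hkn hr hc i.isLt).mp h; omega)
  src_eq i h := rfl
  sink_mem i h := by
    have hh := (not_mem_regionK hkn hr hc i.isLt).mp h
    have hik := i.isLt
    have hsk : (constPath k (n - k) ↑i (c + (↑i - r)) i.isLt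
        (by have := (not_mem_regionK hkn hr hc i.isLt).mp h; omega)).sink
        = c + (↑i - r) := rfl
    rw [hsk]
    exact (mem_sink_regionK hk hkn hr hc (by omega)).mpr (by omega)
  sink_inj i h i' h' hs := by
    have h1 := (not_mem_regionK hkn hr hc i.isLt).mp h
    have h2 := (not_mem_regionK hkn hr hc i'.isLt).mp h'
    have hs' : c + (↑i - r) = c + (↑i' - r) := hs
    exact Fin.ext (by omega)
  disj i h i' h' hne := by
    have h1 := (not_mem_regionK hkn hr hc i.isLt).mp h
    have h2 := (not_mem_regionK hkn hr hc i'.isLt).mp h'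
    have hv : (↑i : ℕ) ≠ ↑i' := fun e => hne (Fin.ext e)
    rcases hv.lt_or_gt with hlt | hlt
    · exact constPath_disj _ _ _ _ hlt (by omega)
    · exact (constPath_disj _ _ _ _ hlt (by omega)).symm

/-- Uniqueness: every disjoint path family for `K(r,c)` is the canonical one. -/
theorem family_eq_canonF {k n r c : ℕ} (hk : 0 < k) (hkn : k < n) (hr : r < k)
    (hc : c < n - k) (Fam : DisjointFamily k n (regionK k n r c)) :
    Fam = canonF k n r c hk hkn hr hc := by
  have ht1 : min (k - r) (n - k - c) ≤ k - r := min_le_left _ _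
  have ht2 : min (k - r) (n - k - c) ≤ n - k - c := min_le_right _ _
  have ht3 : min (k - r) (n - k - c) = k - r ∨ min (k - r) (n - k - c) = n - k - c :=
    min_choice _ _
  have hsrc : ∀ (i : Fin k) (h : (↑i : ℕ) ∉ regionK k n r c),
      r ≤ ↑i ∧ (↑i : ℕ) < r + (n - k) - c := fun i h =>
    (not_mem_regionK hkn hr hc i.isLt).mp h
  have hsinkb : ∀ (i : Fin k) (h : (↑i : ℕ) ∉ regionK k n r c),
      c ≤ (Fam.F i h).sink ∧ (Fam.F i h).sink + 1 ≤ c + min (k - r) (n - k - c) := by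
    intro i h
    have hm := Fam.sink_mem i h
    have hlt : (Fam.F i h).sink < n - k := (Fam.F i h).d_lt _
    have h2 := (mem_sink_regionK hk hkn hr hc hlt).mp hm
    omega
  have hmono : ∀ (i : Fin k) (h : (↑i : ℕ) ∉ regionK k n r c) (i' : Fin k)
      (h' : (↑i' : ℕ) ∉ regionK k n r c), (↑i : ℕ) < ↑i' →
      (Fam.F i h).sink < (Fam.F i' h').sink := by
    intro i h i' h' hii
    have hd := Fam.disj i h i' h' (fun e => by
      rw [e] at hii; exact lt_irrefl _ hii)
    refine sink_lt_of_disjoint hd ?_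
    rw [Fam.src_eq, Fam.src_eq]
    exact hii
  -- lower bound on sinks
  have hlb : ∀ s (i : Fin k) (h : (↑i : ℕ) ∉ regionK k n r c), (↑i : ℕ) = r + s →
      c + s ≤ (Fam.F i h).sink := by
    intro s
    induction s with
    | zero =>
      intro i h hi
      have := (hsinkb i h).1
      omega
    | succ s ih =>
      intro i h hi
      have hs' := hsrc i h
      have hik0 : r + s < k := by have := i.isLt; omega
      have h0 : ((⟨r + s, hik0⟩ : Fin k) : ℕ) ∉ regionK k n r c :=
        (not_mem_regionK hkn hr hc hik0).mpr ⟨by omega, by omega⟩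
      have hih := ih ⟨r + s, hik0⟩ h0 rfl
      have hm := hmono ⟨r + s, hik0⟩ h0 i h (by simp [hi])
      omega
  -- upper bound on sinks (downward induction)
  have hub : ∀ u s (i : Fin k) (h : (↑i : ℕ) ∉ regionK k n r c), (↑i : ℕ) = r + s →
      s + u + 1 = min (k - r) (n - k - c) →
      (Fam.F i h).sink + u + 1 ≤ c + min (k - r) (n - k - c) := by
    intro u
    induction u with
    | zero =>
      intro s i h hi hsu
      have := (hsinkb i h).2
      omega
    | succ u ih =>
      intro s i h hi hsu
      have hik' : r + (s + 1) < k := by omega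
      have h' : ((⟨r + (s + 1), hik'⟩ : Fin k) : ℕ) ∉ regionK k n r c :=
        (not_mem_regionK hkn hr hc hik').mpr ⟨by omega, by omega⟩
      have hih := ih (s + 1) ⟨r + (s + 1), hik'⟩ h' rfl (by omega)
      have hm := hmono i h ⟨r + (s + 1), hik'⟩ h' (by simp [hi])
      omega
  -- the sinks are determined
  have hsink : ∀ (i : Fin k) (h : (↑i : ℕ) ∉ regionK k n r c),
      (Fam.F i h).sink = c + (↑i - r) := by
    intro i h
    have hs := hsrc i h
    have hik := i.isLt
    have h1 := hlb (↑i - r) i h (by omega)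
    have h2 := hub (min (k - r) (n - k - c) - 1 - (↑i - r)) (↑i - r) i h (by omega)
      (by omega)
    omega
  -- the descent functions are determined (downward induction)
  have hdconst : ∀ u (i : Fin k) (h : (↑i : ℕ) ∉ regionK k n r c),
      (↑i - r) + u + 1 = min (k - r) (n - k - c) →
      ∀ ρ, (Fam.F i h).d ρ = c + (↑i - r) := by
    intro u
    induction u with
    | zero =>
      intro i h hiu
      have hs := hsrc i h
      have hik := i.isLt
      have hdk : (Fam.F i h).d (k - 1) = c + (↑i - r) := hsink i h
      apply d_const _ hdk
      rw [Fam.src_eq i h]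
      by_cases hcase : (↑i : ℕ) = k - 1
      · have he : (Fam.F i h).d (↑i : ℕ) = (Fam.F i h).d (k - 1) := by rw [hcase]
        omega
      · have hlt := (Fam.F i h).d_lt (↑i : ℕ)
        omega
    | succ u ih =>
      intro i h hiu
      have hs := hsrc i h
      have hik := i.isLt
      have hik' : r + ((↑i - r) + 1) < k := by omega
      have h' : ((⟨r + ((↑i - r) + 1), hik'⟩ : Fin k) : ℕ) ∉ regionK k n r c :=
        (not_mem_regionK hkn hr hc hik').mpr ⟨by omega, by omega⟩
      have hih := ih ⟨r + ((↑i - r) + 1), hik'⟩ h' (by simp; omega)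
      have hih' : ∀ ρ, (Fam.F ⟨r + ((↑i - r) + 1), hik'⟩ h').d ρ = c + ((↑i - r) + 1) := by
        intro ρ
        rw [hih ρ]
        congr 1
        simp
      have hdk : (Fam.F i h).d (k - 1) = c + (↑i - r) := hsink i h
      apply d_const _ hdk
      rw [Fam.src_eq i h]
      by_contra hgt
      push_neg at hgt
      have hd := Fam.disj i h ⟨r + ((↑i - r) + 1), hik'⟩ h' (by
        intro e
        have := congrArg (Fin.val) e
        simp at this
        omega)
      have hsrc1 : (Fam.F i h).src = (↑i : ℕ) := Fam.src_eq i h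
      have hsrc2 : (Fam.F ⟨r + ((↑i - r) + 1), hik'⟩ h').src = r + ((↑i - r) + 1) := by
        rw [Fam.src_eq]
      have hv1 : ((r + ((↑i - r) + 1), (Fam.F i h).d (↑i : ℕ)) : ℕ × ℕ)
          ∈ (Fam.F i h).vertexSet := by
        simp only [WebPath.vertexSet, Set.mem_setOf_eq, hsrc1]
        refine ⟨by omega, by omega, (Fam.F i h).anti (by omega), ?_⟩
        rw [if_neg (by omega)]
        exact (Fam.F i h).anti (by omega)
      have hv2 : ((r + ((↑i - r) + 1), (Fam.F i h).d (↑i : ℕ)) : ℕ × ℕ)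
          ∈ (Fam.F ⟨r + ((↑i - r) + 1), hik'⟩ h').vertexSet := by
        simp only [WebPath.vertexSet, Set.mem_setOf_eq, hsrc2]
        have hd1 := hih' (r + ((↑i - r) + 1))
        have hd2 := (Fam.F i h).d_lt (↑i : ℕ)
        refine ⟨le_rfl, by omega, by omega, ?_⟩
        simp only [if_true]
        omega
      exact Set.disjoint_left.mp hd hv1 hv2
  -- assemble
  apply family_ext
  intro i h
  have hs := hsrc i h
  have hik := i.isLt
  apply webPath_ext
  · rw [Fam.src_eq i h]; rfl
  · funext ρ
    have hd := hdconst (min (k - r) (n - k - c) - 1 - (↑i - r)) i h (by omega) ρ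
    rw [hd]; rfl

/-- The product of region variables in the rectangle `[a, k) × [b, n-k)`. -/
def Brect (k n : ℕ) (x : ℕ → ℕ → ℝ) (a b : ℕ) : ℝ :=
  ∏ ρ ∈ Finset.Icc a (k - 1), ∏ col ∈ Finset.Icc b (n - k - 1), x ρ col

/-- The value of `P_{K(a,b)}` as an explicit product. -/
def Wval (k n : ℕ) (x : ℕ → ℕ → ℝ) (a b : ℕ) : ℝ :=
  ∏ s ∈ Finset.range (min (k - a) (n - k - b)), Brect k n x (a + s) (b + s)

theorem Brect_pos {k n : ℕ} {x : ℕ → ℕ → ℝ} (hx : ∀ r c, 0 < x r c) (a b : ℕ) :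
    0 < Brect k n x a b :=
  Finset.prod_pos fun _ _ => Finset.prod_pos fun _ _ => hx _ _

theorem Wval_pos {k n : ℕ} {x : ℕ → ℕ → ℝ} (hx : ∀ r c, 0 < x r c) (a b : ℕ) :
    0 < Wval k n x a b :=
  Finset.prod_pos fun _ _ => Brect_pos hx _ _

theorem webP_eq_Wval (k n : ℕ) (hk : 0 < k) (hkn : k < n) (x : ℕ → ℕ → ℝ)
    (r c : ℕ) : webP k n x (regionK k n r c) = Wval k n x r c := by
  by_cases hcond : r < k ∧ c < n - k
  · obtain ⟨hr, hc⟩ := hcond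
    have hne : regionK k n r c ≠ ∅ := by
      intro hE
      have hmem : n - 1 - c ∈ regionK k n r c := by
        rw [regionK, if_pos ⟨hr, hc⟩]
        simp only [Finset.mem_union, Finset.mem_range, Finset.mem_Icc]
        omega
      rw [hE] at hmem
      simp at hmem
    rw [webP, if_neg hne]
    haveI : Unique (DisjointFamily k n (regionK k n r c)) :=
      ⟨⟨canonF k n r c hk hkn hr hc⟩, fun a => family_eq_canonF hk hkn hr hc a⟩
    rw [finsum_unique, family_eq_canonF hk hkn hr hc default]
    rw [DisjointFamily.regionWeight]
    have step1 : ∀ i : Fin k,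
        (if h : (↑i : ℕ) ∉ regionK k n r c then
          ((canonF k n r c hk hkn hr hc).F i h).regionProd x else 1)
        = (fun j => if r ≤ j ∧ j < r + (n - k) - c then
            Brect k n x j (c + (j - r)) else 1) (↑i : ℕ) := by
      intro i
      by_cases h : (↑i : ℕ) ∉ regionK k n r c
      · rw [dif_pos h]
        simp only
        rw [if_pos ((not_mem_regionK hkn hr hc i.isLt).mp h)]
        rfl
      · rw [dif_neg h]
        simp only
        rw [if_neg (fun hcon => h ((not_mem_regionK hkn hr hc i.isLt).mpr hcon))]
    rw [Finset.prod_congr rfl (fun i _ => step1 i)]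
    rw [Fin.prod_univ_eq_prod_range (fun j => if r ≤ j ∧ j < r + (n - k) - c then
      Brect k n x j (c + (j - r)) else 1) k]
    rw [← Finset.prod_filter]
    have hfil : (Finset.range k).filter (fun j => r ≤ j ∧ j < r + (n - k) - c)
        = Finset.Ico r (r + min (k - r) (n - k - c)) := by
      ext j
      simp only [Finset.mem_filter, Finset.mem_range, Finset.mem_Ico]
      omega
    rw [hfil, Finset.prod_Ico_eq_prod_range, Wval]
    have hmm : r + min (k - r) (n - k - c) - r = min (k - r) (n - k - c) := by omega
    rw [hmm]
    refine Finset.prod_congr rfl fun s _ => ?_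
    congr 1
    omega
  · rw [regionK, if_neg hcond, webP, if_pos rfl, Wval]
    have h0 : min (k - r) (n - k - c) = 0 := by omega
    rw [h0]
    simp

theorem Brect_row {k n : ℕ} (x : ℕ → ℕ → ℝ) (hk : 0 < k) {a : ℕ} (ha : a < k)
    (b : ℕ) : Brect k n x a b
      = (∏ col ∈ Finset.Icc b (n - k - 1), x a col) * Brect k n x (a + 1) b := by
  rw [Brect, Brect]
  have hins : Finset.Icc a (k - 1) = insert a (Finset.Icc (a + 1) (k - 1)) := by
    ext j
    simp only [Finset.mem_insert, Finset.mem_Icc]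
    omega
  rw [hins, Finset.prod_insert (by simp only [Finset.mem_Icc]; omega)]

theorem Brect_one_left {k n : ℕ} (x : ℕ → ℕ → ℝ) (hk : 0 < k) {a : ℕ} (ha : k ≤ a)
    (b : ℕ) : Brect k n x a b = 1 := by
  rw [Brect]
  rw [show Finset.Icc a (k - 1) = ∅ from Finset.Icc_eq_empty (by omega)]
  simp

theorem Brect_one_right {k n : ℕ} (x : ℕ → ℕ → ℝ) (hkn : k < n) (a : ℕ) {b : ℕ}
    (hb : n - k ≤ b) : Brect k n x a b = 1 := by
  rw [Brect]
  apply Finset.prod_eq_one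
  intro ρ _
  rw [show Finset.Icc b (n - k - 1) = ∅ from Finset.Icc_eq_empty (by omega)]
  simp

theorem Brect_rec {k n : ℕ} (x : ℕ → ℕ → ℝ) (hk : 0 < k) {r c : ℕ} (hr : r < k)
    (hc : c < n - k) :
    Brect k n x r c * Brect k n x (r + 1) (c + 1)
      = x r c * (Brect k n x r (c + 1) * Brect k n x (r + 1) c) := by
  have hrow : (∏ col ∈ Finset.Icc c (n - k - 1), x r col)
      = x r c * ∏ col ∈ Finset.Icc (c + 1) (n - k - 1), x r col := by
    have hins : Finset.Icc c (n - k - 1) = insert c (Finset.Icc (c + 1) (n - k - 1)) := by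
      ext j
      simp only [Finset.mem_insert, Finset.mem_Icc]
      omega
    rw [hins, Finset.prod_insert (by simp only [Finset.mem_Icc]; omega)]
  rw [Brect_row x hk hr c, Brect_row x hk hr (c + 1), hrow]
  ring

theorem Wval_rec {k n : ℕ} (x : ℕ → ℕ → ℝ) (hk : 0 < k) (hkn : k < n) (a b : ℕ) :
    Wval k n x a b = Brect k n x a b * Wval k n x (a + 1) (b + 1) := by
  by_cases hcond : a < k ∧ b < n - k
  · obtain ⟨ha, hb⟩ := hcond
    rw [Wval, Wval]
    have h1 : min (k - a) (n - k - b) = min (k - (a + 1)) (n - k - (b + 1)) + 1 := by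
      omega
    rw [h1, Finset.prod_range_succ', mul_comm, Nat.add_zero, Nat.add_zero]
    congr 1
    refine Finset.prod_congr rfl fun s _ => ?_
    have e1 : a + (s + 1) = a + 1 + s := by omega
    have e2 : b + (s + 1) = b + 1 + s := by omega
    rw [e1, e2]
  · have h0 : min (k - a) (n - k - b) = 0 := by omega
    have h0' : min (k - (a + 1)) (n - k - (b + 1)) = 0 := by omega
    rw [Wval, Wval, h0, h0']
    simp only [Finset.range_zero, Finset.prod_empty]
    rcases (by omega : k ≤ a ∨ n - k ≤ b) with hcase | hcase
    · rw [Brect_one_left x hk hcase]; simp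
    · rw [Brect_one_right x hkn a hcase]; simp

/-- `Ψ` is a left inverse of `Φ₁`: for any assignment `x` of positive reals to
the regions of `Web_{k,n}` and every region `(r, c)`,
`(P_{K(i,j)} P_{K(i+1,j-2)} P_{K(i+2,j-1)}) / (P_{K(i,j-1)} P_{K(i+1,j)} P_{K(i+2,j-2)})`
evaluated at `Φ₁(x)` recovers the region variable `x r c` (in cell coordinates,
the label `(i+1, j-2)` becomes `(r+1, c+2)`, etc.). -/
theorem psi_phi_eq_id (k n : ℕ) (hk : 0 < k) (hkn : k < n)
    (x : ℕ → ℕ → ℝ) (hx : ∀ r c, 0 < x r c)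
    (r c : ℕ) (hr : r < k) (hc : c < n - k) :
    (webP k n x (regionK k n r c) * webP k n x (regionK k n (r+1) (c+2)) *
        webP k n x (regionK k n (r+2) (c+1))) /
      (webP k n x (regionK k n r (c+1)) * webP k n x (regionK k n (r+1) c) *
        webP k n x (regionK k n (r+2) (c+2))) = x r c := by
  
    have hkn' : 0 < n - k := by omega
    simp only [webP_eq_Wval k n hk hkn x]
    have hWpos : ∀ a b, 0 < Wval k n x a b := fun a b => Wval_pos hx a b
    rw [div_eq_iff (by
      have := mul_pos (mul_pos (hWpos r (c + 1)) (hWpos (r + 1) c)) (hWpos (r + 2) (c + 2))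
      exact ne_of_gt this)]
    have h1 := Wval_rec x hk hkn r c
    have h2 := Wval_rec x hk hkn (r + 1) (c + 1)
    have h3 := Wval_rec x hk hkn r (c + 1)
    have h4 := Wval_rec x hk hkn (r + 1) c
    have e1 : (r : ℕ) + 1 + 1 = r + 2 := by omega
    have e2 : (c : ℕ) + 1 + 1 = c + 2 := by omega
    rw [e1, e2] at h2
    rw [e2] at h3
    rw [e1] at h4
    have hB := Brect_rec x hk hr hc
    rw [h1, h2, h3, h4]
    linear_combination (Wval k n x (r + 2) (c + 2) * Wval k n x (r + 1) (c + 2) *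
      Wval k n x (r + 2) (c + 1)) * hB
end

section
/- For n ≥ 3, the Stanley–Pitman fan construction yields exactly c_{n−2} = (1/(n−1))·binomial(2(n−2), n−2) maximal cones in R^{n−3}, one for each plane binary tree with n−1 leaves, and each maximal cone is simplicial (cut out by exactly n−3 linearly independent inequalities). -/
namespace PlaneBinaryTree

lemma leaves_eq (T : PlaneBinaryTree) : T.leaves = T.ic + 1 := by
  induction T with
  | leaf => rfl
  | node l r ihl ihr => simp [leaves, ic, ihl, ihr]; omega

def toTree : PlaneBinaryTree → Tree Unit
  | .leaf => .nil
  | .node l r => .node () l.toTree r.toTree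

def ofTree : Tree Unit → PlaneBinaryTree
  | .nil => .leaf
  | .node _ l r => .node (ofTree l) (ofTree r)

def treeEquiv : PlaneBinaryTree ≃ Tree Unit where
  toFun := toTree
  invFun := ofTree
  left_inv := by
    intro T
    induction T with
    | leaf => rfl
    | node l r ihl ihr => simp [toTree, ofTree, ihl, ihr]
  right_inv := by
    intro t
    induction t with
    | nil => rfl
    | node a l r ihl ihr => simp [toTree, ofTree, ihl, ihr]

lemma numNodes_toTree (T : PlaneBinaryTree) : T.toTree.numNodes = T.ic := by
  induction T with
  | leaf => rfl
  | node l r ihl ihr => simp [toTree, Tree.numNodes, ic, ihl, ihr]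

/-- The edge from a root labeled `root` down to the root of the subtree `T`
(with offset `o`), as a finset: empty if `T` is a leaf. -/
def eSet (root : ℕ) : PlaneBinaryTree → ℕ → Finset (ℕ × ℕ)
  | .leaf, _ => ∅
  | .node a b, o => {(root, rootLab (.node a b) o)}

lemma pairs_node (l r : PlaneBinaryTree) (o : ℕ) :
    pairs (.node l r) o =
      pairs l o ∪ pairs r (o + l.ic + 1) ∪ eSet (o + l.ic + 1) l o ∪
        eSet (o + l.ic + 1) r (o + l.ic + 1) := by
  cases l <;> cases r <;> rfl

lemma eSet_bounds {root o : ℕ} {T : PlaneBinaryTree} {p : ℕ × ℕ}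
    (hp : p ∈ eSet root T o) :
    p.1 = root ∧ o + 1 ≤ p.2 ∧ p.2 ≤ o + T.ic ∧ 1 ≤ T.ic := by
  cases T with
  | leaf => simp [eSet] at hp
  | node a b =>
    simp only [eSet, Finset.mem_singleton] at hp
    subst hp
    simp [rootLab, ic]

lemma eSet_eq_of_mem {root o : ℕ} {T : PlaneBinaryTree} {p : ℕ × ℕ}
    (hp : p ∈ eSet root T o) : eSet root T o = {p} := by
  cases T with
  | leaf => simp [eSet] at hp
  | node a b =>
    simp only [eSet, Finset.mem_singleton] at hp
    subst hp
    rfl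

lemma pairs_bounds {T : PlaneBinaryTree} : ∀ {o : ℕ} {p : ℕ × ℕ}, p ∈ T.pairs o →
    o + 1 ≤ p.1 ∧ p.1 ≤ o + T.ic ∧ o + 1 ≤ p.2 ∧ p.2 ≤ o + T.ic := by
  induction T with
  | leaf => intro o p hp; simp [pairs] at hp
  | node l r ihl ihr =>
    intro o p hp
    have hic : (PlaneBinaryTree.node l r).ic = l.ic + r.ic + 1 := rfl
    rw [pairs_node] at hp
    simp only [Finset.mem_union] at hp
    rcases hp with ((hp | hp) | hp) | hp
    · have := ihl hp; omega
    · have := ihr hp; omega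
    · have := eSet_bounds hp; omega
    · have := eSet_bounds hp; omega

lemma disj1 (l r : PlaneBinaryTree) (o : ℕ) :
    Disjoint (l.pairs o) (r.pairs (o + l.ic + 1)) := by
  rw [Finset.disjoint_left]
  intro p hp hq
  have h1 := pairs_bounds hp
  have h2 := pairs_bounds hq
  omega

lemma disj2 (l r : PlaneBinaryTree) (o : ℕ) :
    Disjoint (l.pairs o ∪ r.pairs (o + l.ic + 1)) (eSet (o + l.ic + 1) l o) := by
  rw [Finset.disjoint_left]
  intro p hp hq
  have h2 := eSet_bounds hq
  rcases Finset.mem_union.1 hp with hp | hp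
  · have := pairs_bounds hp; omega
  · have := pairs_bounds hp; omega

lemma disj3 (l r : PlaneBinaryTree) (o : ℕ) :
    Disjoint (l.pairs o ∪ r.pairs (o + l.ic + 1) ∪ eSet (o + l.ic + 1) l o)
      (eSet (o + l.ic + 1) r (o + l.ic + 1)) := by
  rw [Finset.disjoint_left]
  intro p hp hq
  have h2 := eSet_bounds hq
  rcases Finset.mem_union.1 hp with hp | hp
  · rcases Finset.mem_union.1 hp with hp | hp
    · have := pairs_bounds hp; omega
    · have := pairs_bounds hp; omega
  · have := eSet_bounds hp; omega

lemma pairs_card (T : PlaneBinaryTree) : ∀ o : ℕ, (T.pairs o).card = T.ic - 1 := by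
  induction T with
  | leaf => intro o; simp [pairs, ic]
  | node l r ihl ihr =>
    intro o
    rw [pairs_node, Finset.card_union_of_disjoint (disj3 l r o),
      Finset.card_union_of_disjoint (disj2 l r o),
      Finset.card_union_of_disjoint (disj1 l r o), ihl, ihr]
    cases l <;> cases r <;> simp [eSet, ic] <;> omega

/-- The indicator vector (as a function on `ℕ`) of the interval attached to a pair. -/
def ind (p : ℕ × ℕ) (x : ℕ) : ℝ :=
  if min p.1 p.2 ≤ x ∧ x < max p.1 p.2 then 1 else 0

lemma ind_out {T : PlaneBinaryTree} {o : ℕ} {p : ℕ × ℕ} (hp : p ∈ T.pairs o)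
    {x : ℕ} (hx : x ≤ o ∨ o + T.ic ≤ x) : ind p x = 0 := by
  have h := pairs_bounds hp
  rw [ind, if_neg]
  omega

lemma pairs_indep (T : PlaneBinaryTree) :
    ∀ (o : ℕ) (c : ℕ × ℕ → ℝ),
      (∀ x : ℕ, ∑ p ∈ T.pairs o, c p * ind p x = 0) →
      ∀ p ∈ T.pairs o, c p = 0 := by
  induction T with
  | leaf => intro o c _ p hp; simp [pairs] at hp
  | node l r ihl ihr =>
    intro o c hc
    have hsplit : ∀ x : ℕ,
        (∑ p ∈ l.pairs o, c p * ind p x) +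
          (∑ p ∈ r.pairs (o + l.ic + 1), c p * ind p x) +
          (∑ p ∈ eSet (o + l.ic + 1) l o, c p * ind p x) +
          (∑ p ∈ eSet (o + l.ic + 1) r (o + l.ic + 1), c p * ind p x) = 0 := by
      intro x
      have h := hc x
      rw [pairs_node, Finset.sum_union (disj3 l r o), Finset.sum_union (disj2 l r o),
        Finset.sum_union (disj1 l r o)] at h
      linarith
    have hEl : ∀ p ∈ eSet (o + l.ic + 1) l o, c p = 0 := by
      intro p hp
      have hb := eSet_bounds hp
      have h := hsplit (o + l.ic)
      rw [eSet_eq_of_mem hp, Finset.sum_singleton] at h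
      have h1 : (∑ q ∈ l.pairs o, c q * ind q (o + l.ic)) = 0 :=
        Finset.sum_eq_zero fun q hq => by
          have hz : ind q (o + l.ic) = 0 := ind_out hq (by omega)
          rw [hz, mul_zero]
      have h2 : (∑ q ∈ r.pairs (o + l.ic + 1), c q * ind q (o + l.ic)) = 0 :=
        Finset.sum_eq_zero fun q hq => by
          have hz : ind q (o + l.ic) = 0 := ind_out hq (by omega)
          rw [hz, mul_zero]
      have h4 : (∑ q ∈ eSet (o + l.ic + 1) r (o + l.ic + 1), c q * ind q (o + l.ic)) = 0 :=
        Finset.sum_eq_zero fun q hq => by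
          have hb2 := eSet_bounds hq
          have hz : ind q (o + l.ic) = 0 := by rw [ind, if_neg]; omega
          rw [hz, mul_zero]
      have hind : ind p (o + l.ic) = 1 := by rw [ind, if_pos]; omega
      rw [h1, h2, h4, hind] at h
      linarith
    have hEr : ∀ p ∈ eSet (o + l.ic + 1) r (o + l.ic + 1), c p = 0 := by
      intro p hp
      have hb := eSet_bounds hp
      have h := hsplit (o + l.ic + 1)
      rw [eSet_eq_of_mem hp, Finset.sum_singleton] at h
      have h1 : (∑ q ∈ l.pairs o, c q * ind q (o + l.ic + 1)) = 0 :=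
        Finset.sum_eq_zero fun q hq => by
          have hz : ind q (o + l.ic + 1) = 0 := ind_out hq (by omega)
          rw [hz, mul_zero]
      have h2 : (∑ q ∈ r.pairs (o + l.ic + 1), c q * ind q (o + l.ic + 1)) = 0 :=
        Finset.sum_eq_zero fun q hq => by
          have hz : ind q (o + l.ic + 1) = 0 := ind_out hq (by omega)
          rw [hz, mul_zero]
      have h3 : (∑ q ∈ eSet (o + l.ic + 1) l o, c q * ind q (o + l.ic + 1)) = 0 :=
        Finset.sum_eq_zero fun q hq => by
          have hb2 := eSet_bounds hq
          have hz : ind q (o + l.ic + 1) = 0 := by rw [ind, if_neg]; omega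
          rw [hz, mul_zero]
      have hind : ind p (o + l.ic + 1) = 1 := by rw [ind, if_pos]; omega
      rw [h1, h2, h3, hind] at h
      linarith
    have hA : ∀ x : ℕ, (∑ p ∈ l.pairs o, c p * ind p x) = 0 := by
      intro x
      rcases le_or_gt (o + l.ic) x with h | h
      · exact Finset.sum_eq_zero fun q hq => by
          have hz : ind q x = 0 := ind_out hq (by omega)
          rw [hz, mul_zero]
      · have hs := hsplit x
        have h2 : (∑ q ∈ r.pairs (o + l.ic + 1), c q * ind q x) = 0 :=
          Finset.sum_eq_zero fun q hq => by
            have hz : ind q x = 0 := ind_out hq (by omega)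
            rw [hz, mul_zero]
        have h3 : (∑ q ∈ eSet (o + l.ic + 1) l o, c q * ind q x) = 0 :=
          Finset.sum_eq_zero fun q hq => by rw [hEl q hq, zero_mul]
        have h4 : (∑ q ∈ eSet (o + l.ic + 1) r (o + l.ic + 1), c q * ind q x) = 0 :=
          Finset.sum_eq_zero fun q hq => by rw [hEr q hq, zero_mul]
        linarith
    have hB : ∀ x : ℕ, (∑ p ∈ r.pairs (o + l.ic + 1), c p * ind p x) = 0 := by
      intro x
      rcases le_or_gt x (o + l.ic + 1) with h | h
      · exact Finset.sum_eq_zero fun q hq => by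
          have hz : ind q x = 0 := ind_out hq (by omega)
          rw [hz, mul_zero]
      · have hs := hsplit x
        have h1 : (∑ q ∈ l.pairs o, c q * ind q x) = 0 :=
          Finset.sum_eq_zero fun q hq => by
            have hz : ind q x = 0 := ind_out hq (by omega)
            rw [hz, mul_zero]
        have h3 : (∑ q ∈ eSet (o + l.ic + 1) l o, c q * ind q x) = 0 :=
          Finset.sum_eq_zero fun q hq => by rw [hEl q hq, zero_mul]
        have h4 : (∑ q ∈ eSet (o + l.ic + 1) r (o + l.ic + 1), c q * ind q x) = 0 :=
          Finset.sum_eq_zero fun q hq => by rw [hEr q hq, zero_mul]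
        linarith
    intro p hp
    rw [pairs_node] at hp
    rcases Finset.mem_union.1 hp with hp | hp
    · rcases Finset.mem_union.1 hp with hp | hp
      · rcases Finset.mem_union.1 hp with hp | hp
        · exact ihl o c hA p hp
        · exact ihr (o + l.ic + 1) c hB p hp
      · exact hEl p hp
    · exact hEr p hp

end PlaneBinaryTree


open PlaneBinaryTree

/-- For `n ≥ 3`, the Stanley–Pitman construction yields exactly
`c_{n-2} = (1/(n-1))·binomial(2(n-2), n-2)` maximal cones in `ℝ^{n-3}`, one for
each plane binary tree with `n−1` leaves, and each cone is simplicial: it is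
cut out by exactly `n−3` inequalities whose linear functionals (recorded by
their coefficient vectors, the indicator vectors of the intervals
`[min(i,j), max(i,j)−1]`) are linearly independent. -/
theorem stanleyPitman_catalan_count_and_simplicial (n : ℕ) (hn : 3 ≤ n) :
    Nat.card {T : PlaneBinaryTree // T.leaves = n - 1} = catalan (n - 2) ∧
    catalan (n - 2) = (2 * (n - 2)).choose (n - 2) / (n - 1) ∧
    ∀ T : PlaneBinaryTree, T.leaves = n - 1 →
      (T.pairs 0).card = n - 3 ∧
      LinearIndependent ℝ (fun p : (T.pairs 0 : Finset (ℕ × ℕ)) =>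
        (fun t : Fin (n - 3) =>
          if min p.1.1 p.1.2 ≤ t.val + 1 ∧ t.val + 1 < max p.1.1 p.1.2
          then (1 : ℝ) else 0)) := by
  classical
  have hn2 : n - 2 + 1 = n - 1 := by omega
  refine ⟨?_, ?_, ?_⟩
  · have e1 : {T : PlaneBinaryTree // T.leaves = n - 1} ≃
        {t : Tree Unit // t.numNodes = n - 2} :=
      treeEquiv.subtypeEquiv fun T => by
        have h1 : (treeEquiv T).numNodes = T.ic := numNodes_toTree T
        have h2 := T.leaves_eq
        constructor <;> intro <;> omega
    have e2 : {t : Tree Unit // t.numNodes = n - 2} ≃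
        {t : Tree Unit // t ∈ Tree.treesOfNumNodesEq (n - 2)} :=
      Equiv.subtypeEquivRight fun t => BinaryTree.mem_treesOfNumNodesEq.symm
    rw [Nat.card_congr e1, Nat.card_congr e2, Nat.card_eq_finsetCard,
      BinaryTree.treesOfNumNodesEq_card_eq_catalan]
  · rw [catalan_eq_centralBinom_div, hn2]
    rfl
  · intro T hT
    have hic : T.ic = n - 2 := by have := T.leaves_eq; omega
    constructor
    · rw [pairs_card]; omega
    · rw [Fintype.linearIndependent_iff]
      intro g hg
      set c : ℕ × ℕ → ℝ := fun p => if h : p ∈ T.pairs 0 then g ⟨p, h⟩ else 0 with hcdef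
      have hc_eq : ∀ i : {p // p ∈ T.pairs 0}, c i.val = g i := by
        intro i
        simp only [hcdef]
        rw [dif_pos i.2]
      have hC : ∀ x : ℕ, ∑ p ∈ T.pairs 0, c p * ind p x = 0 := by
        intro x
        by_cases hx : 1 ≤ x ∧ x ≤ n - 3
        · have ht : x - 1 < n - 3 := by omega
          have h1 := congrFun hg ⟨x - 1, ht⟩
          simp only [Finset.sum_apply, Pi.smul_apply, smul_eq_mul, Pi.zero_apply] at h1
          rw [← Finset.sum_attach (T.pairs 0) (fun p => c p * ind p x), ← h1,
            Finset.univ_eq_attach]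
          refine Finset.sum_congr rfl fun i _ => ?_
          rw [hc_eq i]
          congr 1
          have hx1 : x - 1 + 1 = x := by omega
          rw [ind, hx1]
        · refine Finset.sum_eq_zero fun q hq => ?_
          have hb := pairs_bounds hq
          have hz : ind q x = 0 := by rw [ind, if_neg]; omega
          rw [hz, mul_zero]
      have hzero := pairs_indep T 0 c hC
      intro i
      rw [← hc_eq i]
      exact hzero i.val i.2
end

section
/- For the web diagram Web_{2,5} with inner region variables x_1 (right inner region) and x_2 (left inner region), the tropical Plücker coordinates modulo the lineality space are: Trop P_{1j} = 0 for all j, Trop P_{23} = 0, Trop P_{24} = min(x_1, 0), Trop P_{25} = min(x_1+x_2, x_1, 0), Trop P_{34} = x_1, Trop P_{35} = min(x_1, x_1+x_2), Trop P_{45} = x_1+x_2; and the common refinement of the domains of linearity of these seven piecewise linear functions on R^2 is a complete fan with exactly 5 maximal cones. -/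
/-- The tropical weight of a path in `Web_{2,5}`: the sum of the inner region
variables lying below the path, where `x₁` is the variable of the right inner
region (cell `(0,1)`) and `x₂` that of the left inner region (cell `(0,0)`);
the outer region variables are set to `0`. -/
def tropPathWeight (p : WebPath 2 3) (x₁ x₂ : ℝ) : ℝ :=
  ∑ r ∈ Finset.Icc p.src 1, ∑ c ∈ Finset.Icc (p.d r) 2,
    (if r = 0 ∧ c = 0 then x₂ else if r = 0 ∧ c = 1 then x₁ else 0)

/-- The tropical weight of a disjoint path family in `Web_{2,5}`. -/
def tropFamilyWeight {K : Finset ℕ} (Fam : DisjointFamily 2 5 K)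
    (x₁ x₂ : ℝ) : ℝ :=
  ∑ i : Fin 2, if h : (i : ℕ) ∉ K then tropPathWeight (Fam.F i h) x₁ x₂ else 0

/-- The tropical Plücker coordinate `Trop P_K` for `Web_{2,5}` (with outer
region variables set to `0`, i.e. modulo the lineality space): the minimum over
all vertex-disjoint path families for `K` of the sums of the inner region
variables below the paths. -/
noncomputable def tropP (K : Finset ℕ) (x₁ x₂ : ℝ) : ℝ :=
  sInf {t | ∃ Fam : DisjointFamily 2 5 K, t = tropFamilyWeight Fam x₁ x₂}

/-- `f : ℝ² → ℝ` agrees with a linear function on `S`. -/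
def IsLinearOn (f : ℝ × ℝ → ℝ) (S : Set (ℝ × ℝ)) : Prop :=
  ∃ a b : ℝ, ∀ v ∈ S, f v = a * v.1 + b * v.2

/-- The ten `2`-element subsets of the (`0`-indexed) labels `{0,…,4}`. -/
def allK : List (Finset ℕ) :=
  [{0,1}, {0,2}, {0,3}, {0,4}, {1,2}, {1,3}, {1,4}, {2,3}, {2,4}, {3,4}]

/-- Path with source 0, descending at column `a` in row 0 and ending at column `b`. -/
def P0 (a b : ℕ) (hb : b ≤ a) (ha : a < 3) : WebPath 2 3 where
  src := 0
  d := fun r => if r = 0 then a else b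
  src_lt := by norm_num
  d_lt := by intro r; split <;> omega
  anti := by intro r s hrs; split <;> split <;> omega
  low := by intro r hr; interval_cases r; rfl
  high := by intro r hr; split <;> [omega; rfl]

/-- Path with source 1 ending at column `b`. -/
def P1 (b : ℕ) (hb : b < 3) : WebPath 2 3 where
  src := 1
  d := fun _ => b
  src_lt := by norm_num
  d_lt := fun _ => hb
  anti := fun _ _ _ => le_rfl
  low := fun _ _ => rfl
  high := fun _ _ => rfl

lemma weight_src1 (p : WebPath 2 3) (h : p.src = 1) (x₁ x₂ : ℝ) :
    tropPathWeight p x₁ x₂ = 0 := by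
  unfold tropPathWeight
  rw [h]
  simp

lemma weight_src0 (p : WebPath 2 3) (h : p.src = 0) (x₁ x₂ : ℝ) :
    tropPathWeight p x₁ x₂ =
      if p.d 0 = 0 then x₁ + x₂ else if p.d 0 = 1 then x₁ else 0 := by
  unfold tropPathWeight
  rw [h]
  rw [show Finset.Icc 0 1 = ({0, 1} : Finset ℕ) by decide]
  rw [Finset.sum_insert (by decide), Finset.sum_singleton]
  have h2 : (∑ c ∈ Finset.Icc (p.d 1) 2,
      (if (1:ℕ) = 0 ∧ c = 0 then x₂ else if (1:ℕ) = 0 ∧ c = 1 then x₁ else 0)) = 0 := by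
    simp
  rw [h2, add_zero]
  have hd : p.d 0 < 3 := p.d_lt 0
  interval_cases h0 : p.d 0
  · rw [show Finset.Icc 0 2 = ({0,1,2} : Finset ℕ) by decide]
    norm_num [Finset.sum_insert, Finset.mem_insert]
    ring
  · rw [show Finset.Icc 1 2 = ({1,2} : Finset ℕ) by decide]
    norm_num [Finset.sum_insert, Finset.mem_insert]
  · rw [show Finset.Icc 2 2 = ({2} : Finset ℕ) by decide]
    norm_num

lemma cross (p0 p1 : WebPath 2 3) (h0 : p0.src = 0) (h1 : p1.src = 1)
    (hd : Disjoint p0.vertexSet p1.vertexSet) : p0.d 0 < p1.d 1 := by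
  by_contra hc
  push_neg at hc
  have hm0 : ((1 : ℕ), p0.d 0) ∈ p0.vertexSet := by
    refine ⟨by omega, by omega, p0.anti (by omega), ?_⟩
    rw [h0]
    simp
  have hm1 : ((1 : ℕ), p0.d 0) ∈ p1.vertexSet := by
    refine ⟨by omega, by omega, hc, ?_⟩
    rw [h1]
    simpa using Nat.le_of_lt_succ (p0.d_lt 0)
  exact Set.disjoint_left.mp hd hm0 hm1

/-- Constructor for disjoint families in `Web_{2,5}`. -/
def mkFam (K : Finset ℕ) (p0 p1 : WebPath 2 3)
    (h0 : (0:ℕ) ∉ K → p0.src = 0 ∧ 5 - 1 - p0.sink ∈ K)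
    (h1 : (1:ℕ) ∉ K → p1.src = 1 ∧ 5 - 1 - p1.sink ∈ K)
    (hb : (0:ℕ) ∉ K → (1:ℕ) ∉ K →
      p0.sink ≠ p1.sink ∧ Disjoint p0.vertexSet p1.vertexSet) :
    DisjointFamily 2 5 K where
  F := fun i _ => if (i : ℕ) = 0 then p0 else p1
  src_eq := by
    intro i h
    fin_cases i
    · simpa using (h0 h).1
    · simpa using (h1 h).1
  sink_mem := by
    intro i h
    fin_cases i
    · simpa using (h0 h).2
    · simpa using (h1 h).2
  sink_inj := by
    intro i h i' h' hs
    fin_cases i <;> fin_cases i' <;> simp_all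
  disj := by
    intro i h i' h' hne
    fin_cases i <;> fin_cases i' <;> simp_all
    exact hb.2.symm

lemma weight_mkFam (K : Finset ℕ) (p0 p1 : WebPath 2 3) h0 h1 hb (x₁ x₂ : ℝ) :
    tropFamilyWeight (mkFam K p0 p1 h0 h1 hb) x₁ x₂ =
      (if (0:ℕ) ∉ K then tropPathWeight p0 x₁ x₂ else 0) +
      (if (1:ℕ) ∉ K then tropPathWeight p1 x₁ x₂ else 0) := by
  unfold tropFamilyWeight mkFam
  rw [Fin.sum_univ_two]
  simp [dite_eq_ite]

lemma sink_def (p : WebPath 2 3) : p.sink = p.d 1 := rfl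

lemma sink_P0 (a b : ℕ) (hb : b ≤ a) (ha : a < 3) : (P0 a b hb ha).sink = b := rfl

lemma sink_P1 (b : ℕ) (hb : b < 3) : (P1 b hb).sink = b := rfl

lemma weight_eq {K : Finset ℕ} (Fam : DisjointFamily 2 5 K) (x₁ x₂ : ℝ) :
    tropFamilyWeight Fam x₁ x₂ =
      (if h : (0:ℕ) ∉ K then tropPathWeight (Fam.F 0 h) x₁ x₂ else 0) +
      (if h : (1:ℕ) ∉ K then tropPathWeight (Fam.F 1 h) x₁ x₂ else 0) := by
  unfold tropFamilyWeight
  rw [Fin.sum_univ_two]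
  rfl

lemma disjP (a b c : ℕ) (hb : b ≤ a) (ha : a < 3) (hc : c < 3) (h : a < c) :
    Disjoint (P0 a b hb ha).vertexSet (P1 c hc).vertexSet := by
  rw [Set.disjoint_left]
  rintro ⟨r, col⟩ ⟨h1, h2, h3, h4⟩ ⟨g1, g2, g3, g4⟩
  simp only [WebPath.vertexSet, P0, P1, Set.mem_setOf_eq] at *
  have hr : r = 1 := by omega
  subst hr
  simp at * <;> omega

lemma eval_0j (j : ℕ) (hj : j = 1 ∨ j = 2 ∨ j = 3 ∨ j = 4) (x₁ x₂ : ℝ) :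
    tropP {0, j} x₁ x₂ = 0 := by
  have h0K : (0:ℕ) ∈ ({0, j} : Finset ℕ) := Finset.mem_insert_self 0 _
  have hjK : j ∈ ({0, j} : Finset ℕ) := Finset.mem_insert_of_mem (Finset.mem_singleton_self j)
  have hset : {t | ∃ Fam : DisjointFamily 2 5 ({0, j} : Finset ℕ),
      t = tropFamilyWeight Fam x₁ x₂} = {0} := by
    ext t
    simp only [Set.mem_setOf_eq, Set.mem_singleton_iff]
    constructor
    · rintro ⟨Fam, rfl⟩
      rw [weight_eq, dif_neg (not_not_intro h0K)]
      split_ifs with h1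
      · norm_num
      · rw [weight_src1 _ (by simpa using Fam.src_eq 1 h1)]; norm_num
    · rintro rfl
      by_cases hj1 : j = 1
      · refine ⟨mkFam _ (P1 0 (by norm_num)) (P1 0 (by norm_num))
          (fun h => absurd h0K h) (fun h => absurd (hj1 ▸ hjK) h)
          (fun h _ => absurd h0K h), ?_⟩
        rw [weight_mkFam, if_neg (not_not_intro h0K),
          if_neg (not_not_intro (hj1 ▸ hjK)), add_zero]
      · have hj3 : 4 - j < 3 := by omega
        refine ⟨mkFam _ (P1 0 (by norm_num)) (P1 (4 - j) hj3)
          (fun h => absurd h0K h)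
          (fun _ => ⟨rfl, by simpa [sink_P1, show 5 - 1 - (4 - j) = j by omega] using hjK⟩)
          (fun h _ => absurd h0K h), ?_⟩
        rw [weight_mkFam, if_neg (not_not_intro h0K), zero_add]
        split_ifs with h1
        · rfl
        · exact (weight_src1 (P1 (4 - j) hj3) rfl x₁ x₂).symm
  unfold tropP
  rw [hset, csInf_singleton]

lemma d0_P0 (a b : ℕ) (hb : b ≤ a) (ha : a < 3) : (P0 a b hb ha).d 0 = a := by
  simp [P0]

lemma w_P0 (a b : ℕ) (hb : b ≤ a) (ha : a < 3) (x₁ x₂ : ℝ) :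
    tropPathWeight (P0 a b hb ha) x₁ x₂ =
      if a = 0 then x₁ + x₂ else if a = 1 then x₁ else 0 := by
  rw [weight_src0 _ rfl, d0_P0]

/-- Single-source family via `P0` for `K` with `0 ∉ K`, `1 ∈ K`. -/
lemma mem_single {K : Finset ℕ} (h0 : (0:ℕ) ∉ K) (h1 : (1:ℕ) ∈ K)
    (a b : ℕ) (hb : b ≤ a) (ha : a < 3) (hs : 5 - 1 - b ∈ K) (x₁ x₂ : ℝ) :
    (if a = 0 then x₁ + x₂ else if a = 1 then x₁ else 0) ∈
      {t | ∃ Fam : DisjointFamily 2 5 K, t = tropFamilyWeight Fam x₁ x₂} := by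
  refine ⟨mkFam K (P0 a b hb ha) (P1 0 (by norm_num))
    (fun _ => ⟨rfl, by rwa [sink_P0]⟩) (fun h => absurd h1 h)
    (fun _ h => absurd h1 h), ?_⟩
  rw [weight_mkFam, if_pos h0, if_neg (not_not_intro h1), add_zero, w_P0]

lemma eval_12 (x₁ x₂ : ℝ) : tropP {1, 2} x₁ x₂ = 0 := by
  have hlow : ∀ t ∈ {t | ∃ Fam : DisjointFamily 2 5 ({1,2} : Finset ℕ),
      t = tropFamilyWeight Fam x₁ x₂}, (0:ℝ) ≤ t := by
    rintro t ⟨Fam, rfl⟩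
    have h0 : (0:ℕ) ∉ ({1,2} : Finset ℕ) := by decide
    rw [weight_eq, dif_pos h0, dif_neg (by decide), add_zero]
    set p := Fam.F 0 h0 with hp
    have hsm := Fam.sink_mem 0 h0
    have hd1 : p.d 1 < 3 := p.d_lt 1
    have hd0 : p.d 0 < 3 := p.d_lt 0
    have hanti : p.d 1 ≤ p.d 0 := p.anti zero_le_one
    rw [← hp] at hsm
    rw [sink_def] at hsm
    simp only [Finset.mem_insert, Finset.mem_singleton] at hsm
    rw [weight_src0 p (by simpa using Fam.src_eq 0 h0)]
    split_ifs <;> [omega; omega; exact le_rfl]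
  have hmem := mem_single (K := {1,2}) (by decide) (by decide) 2 2 le_rfl
    (by norm_num) (by decide) x₁ x₂
  norm_num at hmem
  exact le_antisymm (csInf_le ⟨0, hlow⟩ hmem) (le_csInf ⟨0, hmem⟩ hlow)

lemma eval_13 (x₁ x₂ : ℝ) : tropP {1, 3} x₁ x₂ = min x₁ 0 := by
  have hlow : ∀ t ∈ {t | ∃ Fam : DisjointFamily 2 5 ({1,3} : Finset ℕ),
      t = tropFamilyWeight Fam x₁ x₂}, min x₁ 0 ≤ t := by
    rintro t ⟨Fam, rfl⟩
    have h0 : (0:ℕ) ∉ ({1,3} : Finset ℕ) := by decide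
    rw [weight_eq, dif_pos h0, dif_neg (by decide), add_zero]
    set p := Fam.F 0 h0 with hp
    have hsm := Fam.sink_mem 0 h0
    have hd1 : p.d 1 < 3 := p.d_lt 1
    have hd0 : p.d 0 < 3 := p.d_lt 0
    have hanti : p.d 1 ≤ p.d 0 := p.anti zero_le_one
    rw [← hp, sink_def] at hsm
    simp only [Finset.mem_insert, Finset.mem_singleton] at hsm
    rw [weight_src0 p (by simpa using Fam.src_eq 0 h0)]
    split_ifs <;> [omega; exact min_le_left _ _; exact min_le_right _ _]
  have hm1 := mem_single (K := {1,3}) (by decide) (by decide) 1 1 le_rfl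
    (by norm_num) (by decide) x₁ x₂
  have hm0 := mem_single (K := {1,3}) (by decide) (by decide) 2 1 (by norm_num)
    (by norm_num) (by decide) x₁ x₂
  norm_num at hm1 hm0
  exact le_antisymm (le_min (csInf_le ⟨_, hlow⟩ hm1) (csInf_le ⟨_, hlow⟩ hm0))
    (le_csInf ⟨_, hm1⟩ hlow)

lemma eval_14 (x₁ x₂ : ℝ) : tropP {1, 4} x₁ x₂ = min (x₁ + x₂) (min x₁ 0) := by
  have hlow : ∀ t ∈ {t | ∃ Fam : DisjointFamily 2 5 ({1,4} : Finset ℕ),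
      t = tropFamilyWeight Fam x₁ x₂}, min (x₁ + x₂) (min x₁ 0) ≤ t := by
    rintro t ⟨Fam, rfl⟩
    have h0 : (0:ℕ) ∉ ({1,4} : Finset ℕ) := by decide
    rw [weight_eq, dif_pos h0, dif_neg (by decide), add_zero]
    set p := Fam.F 0 h0 with hp
    rw [weight_src0 p (by simpa using Fam.src_eq 0 h0)]
    split_ifs
    · exact min_le_left _ _
    · exact le_trans (min_le_right _ _) (min_le_left _ _)
    · exact le_trans (min_le_right _ _) (min_le_right _ _)
  have hma := mem_single (K := {1,4}) (by decide) (by decide) 0 0 le_rfl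
    (by norm_num) (by decide) x₁ x₂
  have hmb := mem_single (K := {1,4}) (by decide) (by decide) 1 0 (by norm_num)
    (by norm_num) (by decide) x₁ x₂
  have hmc := mem_single (K := {1,4}) (by decide) (by decide) 2 0 (by norm_num)
    (by norm_num) (by decide) x₁ x₂
  norm_num at hma hmb hmc
  exact le_antisymm
    (le_min (csInf_le ⟨_, hlow⟩ hma)
      (le_min (csInf_le ⟨_, hlow⟩ hmb) (csInf_le ⟨_, hlow⟩ hmc)))
    (le_csInf ⟨_, hma⟩ hlow)

lemma mem_double {K : Finset ℕ} (h0 : (0:ℕ) ∉ K) (h1 : (1:ℕ) ∉ K)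
    (a b c : ℕ) (hb : b ≤ a) (ha : a < 3) (hc : c < 3) (hac : a < c)
    (hsb : 5 - 1 - b ∈ K) (hsc : 5 - 1 - c ∈ K) (hbc : b ≠ c) (x₁ x₂ : ℝ) :
    (if a = 0 then x₁ + x₂ else if a = 1 then x₁ else 0) ∈
      {t | ∃ Fam : DisjointFamily 2 5 K, t = tropFamilyWeight Fam x₁ x₂} := by
  refine ⟨mkFam K (P0 a b hb ha) (P1 c hc)
    (fun _ => ⟨rfl, by rwa [sink_P0]⟩) (fun _ => ⟨rfl, by rwa [sink_P1]⟩)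
    (fun _ _ => ⟨by rwa [sink_P0, sink_P1], disjP a b c hb ha hc hac⟩), ?_⟩
  rw [weight_mkFam, if_pos h0, if_pos h1, weight_src1 (P1 c hc) rfl, add_zero, w_P0]

lemma two_source_facts {K : Finset ℕ} (h0 : (0:ℕ) ∉ K) (h1 : (1:ℕ) ∉ K)
    (Fam : DisjointFamily 2 5 K) :
    (Fam.F 0 h0).d 1 ≤ (Fam.F 0 h0).d 0 ∧
    (Fam.F 0 h0).d 0 < (Fam.F 1 h1).d 1 ∧
    (Fam.F 1 h1).d 1 < 3 ∧
    5 - 1 - (Fam.F 0 h0).d 1 ∈ K ∧ 5 - 1 - (Fam.F 1 h1).d 1 ∈ K ∧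
    (Fam.F 0 h0).d 1 ≠ (Fam.F 1 h1).d 1 := by
  have hs0 : (Fam.F 0 h0).src = 0 := by simpa using Fam.src_eq 0 h0
  have hs1 : (Fam.F 1 h1).src = 1 := by simpa using Fam.src_eq 1 h1
  refine ⟨(Fam.F 0 h0).anti zero_le_one,
    cross _ _ hs0 hs1 (Fam.disj 0 h0 1 h1 (by decide)),
    (Fam.F 1 h1).d_lt 1, Fam.sink_mem 0 h0, Fam.sink_mem 1 h1, ?_⟩
  intro he
  exact absurd (Fam.sink_inj 0 h0 1 h1 he) (by decide)

lemma eval_23 (x₁ x₂ : ℝ) : tropP {2, 3} x₁ x₂ = x₁ := by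
  have hlow : ∀ t ∈ {t | ∃ Fam : DisjointFamily 2 5 ({2,3} : Finset ℕ),
      t = tropFamilyWeight Fam x₁ x₂}, x₁ ≤ t := by
    rintro t ⟨Fam, rfl⟩
    have h0 : (0:ℕ) ∉ ({2,3} : Finset ℕ) := by decide
    have h1 : (1:ℕ) ∉ ({2,3} : Finset ℕ) := by decide
    obtain ⟨f1, f2, f3, f4, f5, f6⟩ := two_source_facts h0 h1 Fam
    rw [weight_eq, dif_pos h0, dif_pos h1,
      weight_src1 (Fam.F 1 h1) (by simpa using Fam.src_eq 1 h1), add_zero,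
      weight_src0 _ (by simpa using Fam.src_eq 0 h0)]
    simp only [Finset.mem_insert, Finset.mem_singleton] at f4 f5
    split_ifs <;> [omega; exact le_rfl; omega]
  have hm := mem_double (K := {2,3}) (by decide) (by decide) 1 1 2 le_rfl
    (by norm_num) (by norm_num) (by norm_num) (by decide) (by decide)
    (by norm_num) x₁ x₂
  norm_num at hm
  exact le_antisymm (csInf_le ⟨_, hlow⟩ hm) (le_csInf ⟨_, hm⟩ hlow)

lemma eval_24 (x₁ x₂ : ℝ) : tropP {2, 4} x₁ x₂ = min x₁ (x₁ + x₂) := by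
  have hlow : ∀ t ∈ {t | ∃ Fam : DisjointFamily 2 5 ({2,4} : Finset ℕ),
      t = tropFamilyWeight Fam x₁ x₂}, min x₁ (x₁ + x₂) ≤ t := by
    rintro t ⟨Fam, rfl⟩
    have h0 : (0:ℕ) ∉ ({2,4} : Finset ℕ) := by decide
    have h1 : (1:ℕ) ∉ ({2,4} : Finset ℕ) := by decide
    obtain ⟨f1, f2, f3, f4, f5, f6⟩ := two_source_facts h0 h1 Fam
    rw [weight_eq, dif_pos h0, dif_pos h1,
      weight_src1 (Fam.F 1 h1) (by simpa using Fam.src_eq 1 h1), add_zero,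
      weight_src0 _ (by simpa using Fam.src_eq 0 h0)]
    simp only [Finset.mem_insert, Finset.mem_singleton] at f4 f5
    split_ifs <;> [exact min_le_right _ _; exact min_le_left _ _; omega]
  have hma := mem_double (K := {2,4}) (by decide) (by decide) 0 0 2 le_rfl
    (by norm_num) (by norm_num) (by norm_num) (by decide) (by decide)
    (by norm_num) x₁ x₂
  have hmb := mem_double (K := {2,4}) (by decide) (by decide) 1 0 2 (by norm_num)
    (by norm_num) (by norm_num) (by norm_num) (by decide) (by decide)
    (by norm_num) x₁ x₂
  norm_num at hma hmb
  exact le_antisymm (le_min (csInf_le ⟨_, hlow⟩ hmb) (csInf_le ⟨_, hlow⟩ hma))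
    (le_csInf ⟨_, hma⟩ hlow)

lemma eval_34 (x₁ x₂ : ℝ) : tropP {3, 4} x₁ x₂ = x₁ + x₂ := by
  have hlow : ∀ t ∈ {t | ∃ Fam : DisjointFamily 2 5 ({3,4} : Finset ℕ),
      t = tropFamilyWeight Fam x₁ x₂}, x₁ + x₂ ≤ t := by
    rintro t ⟨Fam, rfl⟩
    have h0 : (0:ℕ) ∉ ({3,4} : Finset ℕ) := by decide
    have h1 : (1:ℕ) ∉ ({3,4} : Finset ℕ) := by decide
    obtain ⟨f1, f2, f3, f4, f5, f6⟩ := two_source_facts h0 h1 Fam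
    rw [weight_eq, dif_pos h0, dif_pos h1,
      weight_src1 (Fam.F 1 h1) (by simpa using Fam.src_eq 1 h1), add_zero,
      weight_src0 _ (by simpa using Fam.src_eq 0 h0)]
    simp only [Finset.mem_insert, Finset.mem_singleton] at f4 f5
    split_ifs <;> [exact le_rfl; omega; omega]
  have hm := mem_double (K := {3,4}) (by decide) (by decide) 0 0 1 le_rfl
    (by norm_num) (by norm_num) (by norm_num) (by decide) (by decide)
    (by norm_num) x₁ x₂
  norm_num at hm
  exact le_antisymm (csInf_le ⟨_, hlow⟩ hm) (le_csInf ⟨_, hm⟩ hlow)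

lemma interior_line_empty (a b : ℝ) (hab : a ≠ 0 ∨ b ≠ 0) (S : Set (ℝ × ℝ))
    (hS : ∀ v ∈ S, a * v.1 + b * v.2 = 0) : interior S = ∅ := by
  rw [Set.eq_empty_iff_forall_notMem]
  intro x hx
  rcases Metric.mem_nhds_iff.mp (mem_interior_iff_mem_nhds.mp hx) with ⟨ε, hε, hball⟩
  set δ := ε / (2 * (|a| + |b| + 1)) with hδdef
  have hδ : 0 < δ := by positivity
  have hda : δ * |a| < ε := by
    have h1 : δ * (|a| + |b| + 1) = ε / 2 := by
      rw [hδdef]; field_simp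
    nlinarith [abs_nonneg a, abs_nonneg b]
  have hdb : δ * |b| < ε := by
    have h1 : δ * (|a| + |b| + 1) = ε / 2 := by
      rw [hδdef]; field_simp
    nlinarith [abs_nonneg a, abs_nonneg b]
  have h1 : (x.1 + δ * a, x.2 + δ * b) ∈ Metric.ball x ε := by
    rw [Metric.mem_ball, Prod.dist_eq]
    apply max_lt
    · rw [Real.dist_eq]
      simp only [add_sub_cancel_left]
      rwa [abs_mul, abs_of_pos hδ]
    · rw [Real.dist_eq]
      simp only [add_sub_cancel_left]
      rwa [abs_mul, abs_of_pos hδ]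
  have h0 := hS x (interior_subset hx)
  have h2 := hS _ (hball h1)
  simp only at h2
  have hsq : δ * (a ^ 2 + b ^ 2) = 0 := by nlinarith
  have : a ^ 2 + b ^ 2 = 0 := by
    rcases mul_eq_zero.mp hsq with h | h
    · exact absurd h (ne_of_gt hδ)
    · exact h
  have ha2 : a ^ 2 = 0 := le_antisymm (by nlinarith [sq_nonneg b]) (sq_nonneg a)
  have hb2 : b ^ 2 = 0 := le_antisymm (by nlinarith [sq_nonneg a]) (sq_nonneg b)
  rcases hab with h | h
  · exact h ((pow_eq_zero_iff two_ne_zero).mp ha2)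
  · exact h ((pow_eq_zero_iff two_ne_zero).mp hb2)

lemma min_linear_cases {a1 b1 a2 b2 : ℝ} {S : Set (ℝ × ℝ)} (hS : Convex ℝ S)
    (h : IsLinearOn (fun v => min (a1 * v.1 + b1 * v.2) (a2 * v.1 + b2 * v.2)) S) :
    (∀ v ∈ S, a1 * v.1 + b1 * v.2 ≤ a2 * v.1 + b2 * v.2) ∨
    (∀ v ∈ S, a2 * v.1 + b2 * v.2 ≤ a1 * v.1 + b1 * v.2) := by
  by_contra hc
  push_neg at hc
  obtain ⟨⟨u, hu, hu2⟩, ⟨w, hw, hw2⟩⟩ := hc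
  obtain ⟨a, b, hab⟩ := h
  set Du := (a1 * u.1 + b1 * u.2) - (a2 * u.1 + b2 * u.2) with hDu
  set Dw := (a2 * w.1 + b2 * w.2) - (a1 * w.1 + b1 * w.2) with hDw
  have hDu0 : 0 < Du := by rw [hDu]; linarith
  have hDw0 : 0 < Dw := by rw [hDw]; linarith
  set T := Dw / (Du + Dw) with hT
  have hT0 : 0 < T := by positivity
  have hT1 : T < 1 := by
    rw [hT, div_lt_one (by linarith)]; linarith
  set v := T • u + (1 - T) • w with hv
  have hvS : v ∈ S := hS hu hw hT0.le (by linarith) (by ring)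
  have hv1 : v.1 = T * u.1 + (1 - T) * w.1 := by
    rw [hv]; simp [Prod.fst_add, Prod.smul_fst, smul_eq_mul]
  have hv2 : v.2 = T * u.2 + (1 - T) * w.2 := by
    rw [hv]; simp [Prod.snd_add, Prod.smul_snd, smul_eq_mul]
  have hTd : T * Du = (1 - T) * Dw := by
    rw [hT]; field_simp; ring
  have heq : a1 * v.1 + b1 * v.2 = a2 * v.1 + b2 * v.2 := by
    rw [hv1, hv2]
    rw [hDu, hDw] at hTd
    nlinarith [hTd]
  have habu := hab u hu
  have habw := hab w hw
  have habv := hab v hvS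
  simp only [min_eq_right hu2.le] at habu
  simp only [min_eq_left hw2.le] at habw
  simp only [min_eq_left heq.le] at habv
  have expand1 : a1 * v.1 + b1 * v.2 =
      T * (a1 * u.1 + b1 * u.2) + (1 - T) * (a1 * w.1 + b1 * w.2) := by
    rw [hv1, hv2]; ring
  have expandL : a * v.1 + b * v.2 =
      T * (a * u.1 + b * u.2) + (1 - T) * (a * w.1 + b * w.2) := by
    rw [hv1, hv2]; ring
  rw [← habu, ← habw] at expandL
  have key : T * (a1 * u.1 + b1 * u.2) = T * (a2 * u.1 + b2 * u.2) := by
    linarith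
  have := mul_left_cancel₀ (ne_of_gt hT0) key
  linarith

/-- Closed half-plane. -/
def HP (a b : ℝ) : Set (ℝ × ℝ) := {v | 0 ≤ a * v.1 + b * v.2}

/-- Open half-plane. -/
def OHP (a b : ℝ) : Set (ℝ × ℝ) := {v | 0 < a * v.1 + b * v.2}

lemma HP_closed (a b : ℝ) : IsClosed (HP a b) :=
  isClosed_le continuous_const (by fun_prop)

lemma HP_convex (a b : ℝ) : Convex ℝ (HP a b) := by
  intro p hp q hq s t hs ht hst
  simp only [HP, Set.mem_setOf_eq, Prod.fst_add, Prod.snd_add, Prod.smul_fst,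
    Prod.smul_snd, smul_eq_mul] at *
  nlinarith [mul_nonneg hs hp, mul_nonneg ht hq]

lemma HP_cone (a b : ℝ) (c : ℝ) (hc : 0 ≤ c) {v : ℝ × ℝ} (hv : v ∈ HP a b) :
    c • v ∈ HP a b := by
  simp only [HP, Set.mem_setOf_eq, Prod.smul_fst, Prod.smul_snd, smul_eq_mul] at *
  nlinarith [mul_nonneg hc hv]

lemma OHP_open (a b : ℝ) : IsOpen (OHP a b) :=
  isOpen_lt continuous_const (by fun_prop)

lemma OHP_sub (a b : ℝ) : OHP a b ⊆ HP a b := by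
  intro v hv
  simp only [HP, OHP, Set.mem_setOf_eq] at *
  exact le_of_lt hv

/-- The five maximal cones. -/
def C5 : Fin 5 → Set (ℝ × ℝ) :=
  ![HP 1 0 ∩ HP 0 1, HP (-1) 0 ∩ HP 0 1, HP (-1) 0 ∩ HP 0 (-1),
    HP 1 0 ∩ HP (-1) (-1), HP 1 1 ∩ HP 0 (-1)]

lemma C5_props (m : Fin 5) : IsClosed (C5 m) ∧ Convex ℝ (C5 m) ∧
    (∀ (c : ℝ), 0 ≤ c → ∀ v ∈ C5 m, c • v ∈ C5 m) ∧
    (interior (C5 m)).Nonempty := by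
  have key : ∀ a b a' b' : ℝ, (p : ℝ × ℝ) → p ∈ OHP a b ∩ OHP a' b' →
      IsClosed (HP a b ∩ HP a' b') ∧ Convex ℝ (HP a b ∩ HP a' b') ∧
      (∀ (c : ℝ), 0 ≤ c → ∀ v ∈ HP a b ∩ HP a' b', c • v ∈ HP a b ∩ HP a' b') ∧
      (interior (HP a b ∩ HP a' b')).Nonempty := by
    intro a b a' b' p hp
    refine ⟨(HP_closed a b).inter (HP_closed a' b'),
      (HP_convex a b).inter (HP_convex a' b'),
      fun c hc v hv => ⟨HP_cone a b c hc hv.1, HP_cone a' b' c hc hv.2⟩,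
      ⟨p, mem_interior.mpr ⟨OHP a b ∩ OHP a' b',
        Set.inter_subset_inter (OHP_sub a b) (OHP_sub a' b'),
        (OHP_open a b).inter (OHP_open a' b'), hp⟩⟩⟩
  fin_cases m <;> simp only [C5, Matrix.cons_val_zero, Matrix.cons_val_one,
    Matrix.head_cons, Matrix.cons_val_two, Matrix.tail_cons, Matrix.cons_val_three,
    Matrix.cons_val_four]
  · exact key 1 0 0 1 (1, 1) (by constructor <;> simp [OHP] <;> norm_num)
  · exact key (-1) 0 0 1 (-1, 1) (by constructor <;> simp [OHP] <;> norm_num)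
  · exact key (-1) 0 0 (-1) (-1, -1) (by constructor <;> simp [OHP] <;> norm_num)
  · exact key 1 0 (-1) (-1) (1, -2) (by constructor <;> simp [OHP] <;> norm_num)
  · exact key 1 1 0 (-1) (2, -1) (by constructor <;> simp [OHP] <;> norm_num)

lemma mem_C5_0 (v : ℝ × ℝ) : v ∈ C5 0 ↔ 0 ≤ v.1 ∧ 0 ≤ v.2 := by
  show v ∈ HP 1 0 ∩ HP 0 1 ↔ _
  simp only [Set.mem_inter_iff, HP, Set.mem_setOf_eq]
  constructor <;> rintro ⟨h1, h2⟩ <;> exact ⟨by linarith, by linarith⟩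

lemma mem_C5_1 (v : ℝ × ℝ) : v ∈ C5 1 ↔ v.1 ≤ 0 ∧ 0 ≤ v.2 := by
  show v ∈ HP (-1) 0 ∩ HP 0 1 ↔ _
  simp only [Set.mem_inter_iff, HP, Set.mem_setOf_eq]
  constructor <;> rintro ⟨h1, h2⟩ <;> exact ⟨by linarith, by linarith⟩

lemma mem_C5_2 (v : ℝ × ℝ) : v ∈ C5 2 ↔ v.1 ≤ 0 ∧ v.2 ≤ 0 := by
  show v ∈ HP (-1) 0 ∩ HP 0 (-1) ↔ _
  simp only [Set.mem_inter_iff, HP, Set.mem_setOf_eq]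
  constructor <;> rintro ⟨h1, h2⟩ <;> exact ⟨by linarith, by linarith⟩

lemma mem_C5_3 (v : ℝ × ℝ) : v ∈ C5 3 ↔ 0 ≤ v.1 ∧ v.1 + v.2 ≤ 0 := by
  show v ∈ HP 1 0 ∩ HP (-1) (-1) ↔ _
  simp only [Set.mem_inter_iff, HP, Set.mem_setOf_eq]
  constructor <;> rintro ⟨h1, h2⟩ <;> exact ⟨by linarith, by linarith⟩

lemma mem_C5_4 (v : ℝ × ℝ) : v ∈ C5 4 ↔ 0 ≤ v.1 + v.2 ∧ v.2 ≤ 0 := by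
  show v ∈ HP 1 1 ∩ HP 0 (-1) ↔ _
  simp only [Set.mem_inter_iff, HP, Set.mem_setOf_eq]
  constructor <;> rintro ⟨h1, h2⟩ <;> exact ⟨by linarith, by linarith⟩

lemma C5_union : (⋃ m, C5 m) = Set.univ := by
  ext v
  simp only [Set.mem_iUnion, Set.mem_univ, iff_true]
  rcases le_total 0 v.1 with h1 | h1
  · rcases le_total 0 v.2 with h2 | h2
    · exact ⟨0, (mem_C5_0 v).mpr ⟨h1, h2⟩⟩
    · rcases le_total 0 (v.1 + v.2) with h3 | h3
      · exact ⟨4, (mem_C5_4 v).mpr ⟨h3, h2⟩⟩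
      · exact ⟨3, (mem_C5_3 v).mpr ⟨h1, h3⟩⟩
  · rcases le_total 0 v.2 with h2 | h2
    · exact ⟨1, (mem_C5_1 v).mpr ⟨h1, h2⟩⟩
    · exact ⟨2, (mem_C5_2 v).mpr ⟨h1, h2⟩⟩

lemma C5_disj : ∀ m m' : Fin 5, m ≠ m' → interior (C5 m) ∩ interior (C5 m') = ∅ := by
  have hx : ∀ S : Set (ℝ × ℝ), (∀ v ∈ S, v.1 = 0) → interior S = ∅ := fun S h =>
    interior_line_empty 1 0 (Or.inl one_ne_zero) S (fun v hv => by
      rw [one_mul, zero_mul, add_zero]; exact h v hv)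
  have hy : ∀ S : Set (ℝ × ℝ), (∀ v ∈ S, v.2 = 0) → interior S = ∅ := fun S h =>
    interior_line_empty 0 1 (Or.inr one_ne_zero) S (fun v hv => by
      rw [one_mul, zero_mul, zero_add]; exact h v hv)
  have hd : ∀ S : Set (ℝ × ℝ), (∀ v ∈ S, v.1 + v.2 = 0) → interior S = ∅ := fun S h =>
    interior_line_empty 1 1 (Or.inl one_ne_zero) S (fun v hv => by
      rw [one_mul, one_mul]; exact h v hv)
  intro m m' hne
  rw [← interior_inter]
  fin_cases m <;> fin_cases m' <;> (try exact absurd rfl hne)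
  · apply hx
    rintro v ⟨hA, hB⟩
    obtain ⟨a1, a2⟩ := (mem_C5_0 v).mp hA
    obtain ⟨b1, b2⟩ := (mem_C5_1 v).mp hB
    linarith
  · apply hx
    rintro v ⟨hA, hB⟩
    obtain ⟨a1, a2⟩ := (mem_C5_0 v).mp hA
    obtain ⟨b1, b2⟩ := (mem_C5_2 v).mp hB
    linarith
  · apply hx
    rintro v ⟨hA, hB⟩
    obtain ⟨a1, a2⟩ := (mem_C5_0 v).mp hA
    obtain ⟨b1, b2⟩ := (mem_C5_3 v).mp hB
    linarith
  · apply hy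
    rintro v ⟨hA, hB⟩
    obtain ⟨a1, a2⟩ := (mem_C5_0 v).mp hA
    obtain ⟨b1, b2⟩ := (mem_C5_4 v).mp hB
    linarith
  · apply hx
    rintro v ⟨hA, hB⟩
    obtain ⟨a1, a2⟩ := (mem_C5_1 v).mp hA
    obtain ⟨b1, b2⟩ := (mem_C5_0 v).mp hB
    linarith
  · apply hy
    rintro v ⟨hA, hB⟩
    obtain ⟨a1, a2⟩ := (mem_C5_1 v).mp hA
    obtain ⟨b1, b2⟩ := (mem_C5_2 v).mp hB
    linarith
  · apply hx
    rintro v ⟨hA, hB⟩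
    obtain ⟨a1, a2⟩ := (mem_C5_1 v).mp hA
    obtain ⟨b1, b2⟩ := (mem_C5_3 v).mp hB
    linarith
  · apply hy
    rintro v ⟨hA, hB⟩
    obtain ⟨a1, a2⟩ := (mem_C5_1 v).mp hA
    obtain ⟨b1, b2⟩ := (mem_C5_4 v).mp hB
    linarith
  · apply hx
    rintro v ⟨hA, hB⟩
    obtain ⟨a1, a2⟩ := (mem_C5_2 v).mp hA
    obtain ⟨b1, b2⟩ := (mem_C5_0 v).mp hB
    linarith
  · apply hy
    rintro v ⟨hA, hB⟩
    obtain ⟨a1, a2⟩ := (mem_C5_2 v).mp hA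
    obtain ⟨b1, b2⟩ := (mem_C5_1 v).mp hB
    linarith
  · apply hx
    rintro v ⟨hA, hB⟩
    obtain ⟨a1, a2⟩ := (mem_C5_2 v).mp hA
    obtain ⟨b1, b2⟩ := (mem_C5_3 v).mp hB
    linarith
  · apply hx
    rintro v ⟨hA, hB⟩
    obtain ⟨a1, a2⟩ := (mem_C5_2 v).mp hA
    obtain ⟨b1, b2⟩ := (mem_C5_4 v).mp hB
    linarith
  · apply hx
    rintro v ⟨hA, hB⟩
    obtain ⟨a1, a2⟩ := (mem_C5_3 v).mp hA
    obtain ⟨b1, b2⟩ := (mem_C5_0 v).mp hB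
    linarith
  · apply hx
    rintro v ⟨hA, hB⟩
    obtain ⟨a1, a2⟩ := (mem_C5_3 v).mp hA
    obtain ⟨b1, b2⟩ := (mem_C5_1 v).mp hB
    linarith
  · apply hx
    rintro v ⟨hA, hB⟩
    obtain ⟨a1, a2⟩ := (mem_C5_3 v).mp hA
    obtain ⟨b1, b2⟩ := (mem_C5_2 v).mp hB
    linarith
  · apply hd
    rintro v ⟨hA, hB⟩
    obtain ⟨a1, a2⟩ := (mem_C5_3 v).mp hA
    obtain ⟨b1, b2⟩ := (mem_C5_4 v).mp hB
    linarith
  · apply hy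
    rintro v ⟨hA, hB⟩
    obtain ⟨a1, a2⟩ := (mem_C5_4 v).mp hA
    obtain ⟨b1, b2⟩ := (mem_C5_0 v).mp hB
    linarith
  · apply hy
    rintro v ⟨hA, hB⟩
    obtain ⟨a1, a2⟩ := (mem_C5_4 v).mp hA
    obtain ⟨b1, b2⟩ := (mem_C5_1 v).mp hB
    linarith
  · apply hx
    rintro v ⟨hA, hB⟩
    obtain ⟨a1, a2⟩ := (mem_C5_4 v).mp hA
    obtain ⟨b1, b2⟩ := (mem_C5_2 v).mp hB
    linarith
  · apply hd
    rintro v ⟨hA, hB⟩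
    obtain ⟨a1, a2⟩ := (mem_C5_4 v).mp hA
    obtain ⟨b1, b2⟩ := (mem_C5_3 v).mp hB
    linarith

lemma C5_linear : ∀ m : Fin 5, ∀ K ∈ allK, IsLinearOn (fun v => tropP K v.1 v.2) (C5 m) := by
  intro m K hK
  simp only [allK, List.mem_cons, List.not_mem_nil, or_false] at hK
  rcases hK with rfl | rfl | rfl | rfl | rfl | rfl | rfl | rfl | rfl | rfl
  · exact ⟨0, 0, fun v _ => by simp only [eval_0j 1 (by norm_num)]; ring⟩
  · exact ⟨0, 0, fun v _ => by simp only [eval_0j 2 (by norm_num)]; ring⟩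
  · exact ⟨0, 0, fun v _ => by simp only [eval_0j 3 (by norm_num)]; ring⟩
  · exact ⟨0, 0, fun v _ => by simp only [eval_0j 4 (by norm_num)]; ring⟩
  · exact ⟨0, 0, fun v _ => by simp only [eval_12]; ring⟩
  · -- eval_13
    fin_cases m
    · refine ⟨0, 0, fun v hv => ?_⟩
      obtain ⟨h1, h2⟩ := (mem_C5_0 v).mp hv
      simp only [eval_13]
      simp only [min_def]
      split_ifs <;> push_cast <;> linarith
    · refine ⟨1, 0, fun v hv => ?_⟩
      obtain ⟨h1, h2⟩ := (mem_C5_1 v).mp hv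
      simp only [eval_13]
      simp only [min_def]
      split_ifs <;> push_cast <;> linarith
    · refine ⟨1, 0, fun v hv => ?_⟩
      obtain ⟨h1, h2⟩ := (mem_C5_2 v).mp hv
      simp only [eval_13]
      simp only [min_def]
      split_ifs <;> push_cast <;> linarith
    · refine ⟨0, 0, fun v hv => ?_⟩
      obtain ⟨h1, h2⟩ := (mem_C5_3 v).mp hv
      simp only [eval_13]
      simp only [min_def]
      split_ifs <;> push_cast <;> linarith
    · refine ⟨0, 0, fun v hv => ?_⟩
      obtain ⟨h1, h2⟩ := (mem_C5_4 v).mp hv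
      simp only [eval_13]
      simp only [min_def]
      split_ifs <;> push_cast <;> linarith
  · -- eval_14
    fin_cases m
    · refine ⟨0, 0, fun v hv => ?_⟩
      obtain ⟨h1, h2⟩ := (mem_C5_0 v).mp hv
      simp only [eval_14]
      simp only [min_def]
      split_ifs <;> push_cast <;> linarith
    · refine ⟨1, 0, fun v hv => ?_⟩
      obtain ⟨h1, h2⟩ := (mem_C5_1 v).mp hv
      simp only [eval_14]
      simp only [min_def]
      split_ifs <;> push_cast <;> linarith
    · refine ⟨1, 1, fun v hv => ?_⟩
      obtain ⟨h1, h2⟩ := (mem_C5_2 v).mp hv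
      simp only [eval_14]
      simp only [min_def]
      split_ifs <;> push_cast <;> linarith
    · refine ⟨1, 1, fun v hv => ?_⟩
      obtain ⟨h1, h2⟩ := (mem_C5_3 v).mp hv
      simp only [eval_14]
      simp only [min_def]
      split_ifs <;> push_cast <;> linarith
    · refine ⟨0, 0, fun v hv => ?_⟩
      obtain ⟨h1, h2⟩ := (mem_C5_4 v).mp hv
      simp only [eval_14]
      simp only [min_def]
      split_ifs <;> push_cast <;> linarith
  · exact ⟨1, 0, fun v _ => by simp only [eval_23]; ring⟩
  · -- eval_24
    fin_cases m
    · refine ⟨1, 0, fun v hv => ?_⟩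
      obtain ⟨h1, h2⟩ := (mem_C5_0 v).mp hv
      simp only [eval_24]
      simp only [min_def]
      split_ifs <;> push_cast <;> linarith
    · refine ⟨1, 0, fun v hv => ?_⟩
      obtain ⟨h1, h2⟩ := (mem_C5_1 v).mp hv
      simp only [eval_24]
      simp only [min_def]
      split_ifs <;> push_cast <;> linarith
    · refine ⟨1, 1, fun v hv => ?_⟩
      obtain ⟨h1, h2⟩ := (mem_C5_2 v).mp hv
      simp only [eval_24]
      simp only [min_def]
      split_ifs <;> push_cast <;> linarith
    · refine ⟨1, 1, fun v hv => ?_⟩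
      obtain ⟨h1, h2⟩ := (mem_C5_3 v).mp hv
      simp only [eval_24]
      simp only [min_def]
      split_ifs <;> push_cast <;> linarith
    · refine ⟨1, 1, fun v hv => ?_⟩
      obtain ⟨h1, h2⟩ := (mem_C5_4 v).mp hv
      simp only [eval_24]
      simp only [min_def]
      split_ifs <;> push_cast <;> linarith
  · exact ⟨1, 1, fun v _ => by simp only [eval_34]; ring⟩

lemma C5_max : ∀ S : Set (ℝ × ℝ), Convex ℝ S →
    (∀ K ∈ allK, IsLinearOn (fun v => tropP K v.1 v.2) S) →
    ∃ m, S ⊆ C5 m := by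
  intro S hconv hlin
  have l13 : IsLinearOn (fun v => min (1 * v.1 + 0 * v.2) (0 * v.1 + 0 * v.2)) S := by
    obtain ⟨a, b, h⟩ := hlin {1, 3} (by simp [allK])
    refine ⟨a, b, fun v hv => ?_⟩
    have h' := h v hv
    simp only [eval_13] at h'
    beta_reduce
    rw [show (1:ℝ) * v.1 + 0 * v.2 = v.1 by ring, show (0:ℝ) * v.1 + 0 * v.2 = 0 by ring]
    exact h'
  have l24 : IsLinearOn (fun v => min (1 * v.1 + 0 * v.2) (1 * v.1 + 1 * v.2)) S := by
    obtain ⟨a, b, h⟩ := hlin {2, 4} (by simp [allK])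
    refine ⟨a, b, fun v hv => ?_⟩
    have h' := h v hv
    simp only [eval_24] at h'
    beta_reduce
    rw [show (1:ℝ) * v.1 + 0 * v.2 = v.1 by ring,
      show (1:ℝ) * v.1 + 1 * v.2 = v.1 + v.2 by ring]
    exact h'
  rcases min_linear_cases hconv l13 with hx | hx <;>
    rcases min_linear_cases hconv l24 with hy | hy
  · exact ⟨1, fun v hv => (mem_C5_1 v).mpr
      ⟨by linarith [hx v hv], by linarith [hy v hv]⟩⟩
  · exact ⟨2, fun v hv => (mem_C5_2 v).mpr
      ⟨by linarith [hx v hv], by linarith [hy v hv]⟩⟩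
  · exact ⟨0, fun v hv => (mem_C5_0 v).mpr
      ⟨by linarith [hx v hv], by linarith [hy v hv]⟩⟩
  · -- 0 ≤ x₁ and x₂ ≤ 0 on S; use P_{25} to split on the sign of x₁ + x₂
    have l14 : IsLinearOn (fun v => min (1 * v.1 + 1 * v.2) (0 * v.1 + 0 * v.2)) S := by
      obtain ⟨a, b, h⟩ := hlin {1, 4} (by simp [allK])
      refine ⟨a, b, fun v hv => ?_⟩
      have h' := h v hv
      simp only [eval_14] at h'
      have h0 : 0 ≤ v.1 := by linarith [hx v hv]
      rw [min_eq_right h0] at h'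
      beta_reduce
      rw [show (1:ℝ) * v.1 + 1 * v.2 = v.1 + v.2 by ring,
        show (0:ℝ) * v.1 + 0 * v.2 = 0 by ring]
      exact h'
    rcases min_linear_cases hconv l14 with hd | hd
    · exact ⟨3, fun v hv => (mem_C5_3 v).mpr
        ⟨by linarith [hx v hv], by linarith [hd v hv]⟩⟩
    · exact ⟨4, fun v hv => (mem_C5_4 v).mpr
        ⟨by linarith [hd v hv], by linarith [hy v hv]⟩⟩

/-- For `Web_{2,5}` (labels written `0`-indexed, so `P_{ij}` of the paper is
`tropP {i-1, j-1}`): the tropical Plücker coordinates modulo the lineality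
space are `Trop P_{1j} = 0`, `Trop P_{23} = 0`, `Trop P_{24} = min(x₁,0)`,
`Trop P_{25} = min(x₁+x₂, x₁, 0)`, `Trop P_{34} = x₁`,
`Trop P_{35} = min(x₁, x₁+x₂)`, `Trop P_{45} = x₁+x₂`; and the common
refinement of the domains of linearity of these piecewise linear functions on
`ℝ²` is a complete fan with exactly `5` maximal cones. -/
theorem trop_gr25_formulas_and_fan :
    (∀ x₁ x₂ : ℝ,
      (∀ j : ℕ, 1 ≤ j → j ≤ 4 → tropP {0, j} x₁ x₂ = 0) ∧
      tropP {1, 2} x₁ x₂ = 0 ∧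
      tropP {1, 3} x₁ x₂ = min x₁ 0 ∧
      tropP {1, 4} x₁ x₂ = min (x₁ + x₂) (min x₁ 0) ∧
      tropP {2, 3} x₁ x₂ = x₁ ∧
      tropP {2, 4} x₁ x₂ = min x₁ (x₁ + x₂) ∧
      tropP {3, 4} x₁ x₂ = x₁ + x₂) ∧
    (∃ C : Fin 5 → Set (ℝ × ℝ),
      (∀ m, IsClosed (C m) ∧ Convex ℝ (C m) ∧
        (∀ (c : ℝ), 0 ≤ c → ∀ v ∈ C m, c • v ∈ C m) ∧
        (interior (C m)).Nonempty) ∧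
      (⋃ m, C m) = Set.univ ∧
      (∀ m m', m ≠ m' → interior (C m) ∩ interior (C m') = ∅) ∧
      (∀ m, ∀ K ∈ allK, IsLinearOn (fun v => tropP K v.1 v.2) (C m)) ∧
      (∀ S : Set (ℝ × ℝ), Convex ℝ S →
        (∀ K ∈ allK, IsLinearOn (fun v => tropP K v.1 v.2) S) →
        ∃ m, S ⊆ C m)) := by
  constructor
  · intro x₁ x₂
    exact ⟨fun j hj1 hj4 => eval_0j j (by omega) x₁ x₂, eval_12 x₁ x₂,
      eval_13 x₁ x₂, eval_14 x₁ x₂, eval_23 x₁ x₂, eval_24 x₁ x₂, eval_34 x₁ x₂⟩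
  · exact ⟨C5, C5_props, C5_union, C5_disj, C5_linear, C5_max⟩
end
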